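/- arXiv:1702.05423 — 6 statements merged into one kernel-verified Lean document; each statement's English description precedes it below -/
import Mathlib

section
/- Let (Ω, μ) be a probability space, A a real p×N matrix, b ∈ ℝ^p, F : ℝ^N → ℝ a convex (hence continuous) function, x ∈ ℝ^N, γ > 0, and φ : ℝ^p → ℝ a continuous function. Let x̂ : Ω → ℝ^N be measurable such that ω ↦ F(x̂(ω)) and ω ↦ ‖A x̂(ω) − b‖ are integrable. Assume that for every measurable map Λ : Ω → ℝ^p with ‖Λ(ω)‖ ≤ γ for all ω, one has ∫ (F(x̂(ω)) − F(x) − ⟨Λ(ω), A x̂(ω) − b⟩) dμ(ω) ≤ ∫ φ(Λ(ω)) dμ(ω). Then ∫ (F(x̂(ω)) − F(x) + γ‖A x̂(ω) − b‖) dμ(ω) ≤ sup_{λ ∈ ℝ^p, ‖λ‖ ≤ γ} φ(λ). -/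
open MeasureTheory

/-- Lemma 1.2 of the paper. -/
theorem stmt_0
    {Ω : Type*} [MeasurableSpace Ω] (μ : Measure Ω) [IsProbabilityMeasure μ]
    {p N : ℕ}
    (A : EuclideanSpace ℝ (Fin N) →L[ℝ] EuclideanSpace ℝ (Fin p))
    (b : EuclideanSpace ℝ (Fin p))
    (F : EuclideanSpace ℝ (Fin N) → ℝ)
    (hF : ConvexOn ℝ Set.univ F)
    (x : EuclideanSpace ℝ (Fin N)) (γ : ℝ) (hγ : 0 < γ)
    (φ : EuclideanSpace ℝ (Fin p) → ℝ) (hφ : Continuous φ)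
    (xhat : Ω → EuclideanSpace ℝ (Fin N)) (hxhat : Measurable xhat)
    (hint1 : Integrable (fun ω => F (xhat ω)) μ)
    (hint2 : Integrable (fun ω => ‖A (xhat ω) - b‖) μ)
    (h : ∀ Λ : Ω → EuclideanSpace ℝ (Fin p), Measurable Λ → (∀ ω, ‖Λ ω‖ ≤ γ) →
      ∫ ω, (F (xhat ω) - F x - inner ℝ (Λ ω) (A (xhat ω) - b)) ∂μ
        ≤ ∫ ω, φ (Λ ω) ∂μ) :
    ∫ ω, (F (xhat ω) - F x + γ * ‖A (xhat ω) - b‖) ∂μ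
      ≤ sSup (φ '' {l : EuclideanSpace ℝ (Fin p) | ‖l‖ ≤ γ}) := by
  set v : Ω → EuclideanSpace ℝ (Fin p) := fun ω => A (xhat ω) - b with hv
  set Λ : Ω → EuclideanSpace ℝ (Fin p) :=
    fun ω => (-(γ / ‖v ω‖)) • v ω with hΛdef
  have hvmeas : Measurable v := by
    exact (A.continuous.measurable.comp hxhat).sub measurable_const
  have hΛmeas : Measurable Λ := by
    refine Measurable.smul (f := fun ω => -(γ / ‖v ω‖)) (g := v) ?_ ?_
    · exact ((measurable_const.div hvmeas.norm)).neg
    · exact hvmeas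
  have hΛnorm : ∀ ω, ‖Λ ω‖ ≤ γ := by
    intro ω
    by_cases hz : v ω = 0
    · simp [hΛdef, hz, hγ.le]
    · have hn : (0:ℝ) < ‖v ω‖ := norm_pos_iff.mpr hz
      simp only [hΛdef, norm_smul, norm_neg, Real.norm_eq_abs,
        abs_div, abs_of_pos hγ, abs_of_pos hn]
      rw [div_mul_cancel₀]
      exact hn.ne'
  have hinner : ∀ ω, (inner ℝ (Λ ω) (v ω) : ℝ) = -(γ * ‖v ω‖) := by
    intro ω
    by_cases hz : v ω = 0
    · simp [hΛdef, hz]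
    · have hn : (0:ℝ) < ‖v ω‖ := norm_pos_iff.mpr hz
      rw [hΛdef]
      simp only [real_inner_smul_left, real_inner_self_eq_norm_sq]
      field_simp
  have key := h Λ hΛmeas hΛnorm
  have hintEq : (∫ ω, (F (xhat ω) - F x - inner ℝ (Λ ω) (A (xhat ω) - b)) ∂μ)
      = ∫ ω, (F (xhat ω) - F x + γ * ‖A (xhat ω) - b‖) ∂μ := by
    congr 1
    funext ω
    rw [show A (xhat ω) - b = v ω from rfl, hinner ω]
    ring
  rw [hintEq] at key
  refine key.trans ?_
  -- bound ∫ φ (Λ ω) by sSup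
  set S : Set ℝ := φ '' {l : EuclideanSpace ℝ (Fin p) | ‖l‖ ≤ γ} with hS
  have hball : {l : EuclideanSpace ℝ (Fin p) | ‖l‖ ≤ γ} = Metric.closedBall 0 γ := by
    ext l; simp [Metric.mem_closedBall, dist_zero_right]
  have hcompact : IsCompact S := by
    rw [hS, hball]
    exact (isCompact_closedBall 0 γ).image hφ
  have hbdd : BddAbove S := hcompact.bddAbove
  have hmem : ∀ ω, φ (Λ ω) ∈ S := fun ω => ⟨Λ ω, hΛnorm ω, rfl⟩
  have hle : ∀ ω, φ (Λ ω) ≤ sSup S := fun ω => le_csSup hbdd (hmem ω)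
  have hbddb : BddBelow S := hcompact.bddBelow
  have hintφ : Integrable (fun ω => φ (Λ ω)) μ := by
    have hmeasφ : Measurable fun ω => φ (Λ ω) := hφ.measurable.comp hΛmeas
    refine ⟨hmeasφ.aestronglyMeasurable, ?_⟩
    have hb : ∀ ω, ‖φ (Λ ω)‖ ≤ max |sSup S| |sInf S| := by
      intro ω
      rw [Real.norm_eq_abs, abs_le]
      constructor
      · calc -(max |sSup S| |sInf S|) ≤ -|sInf S| := by
              simp [neg_le_neg_iff]
          _ ≤ sInf S := neg_abs_le _
          _ ≤ φ (Λ ω) := csInf_le hbddb (hmem ω)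
      · exact (hle ω).trans ((le_abs_self _).trans (le_max_left _ _))
    exact (hasFiniteIntegral_const _).mono' (Filter.Eventually.of_forall hb)
  calc ∫ ω, φ (Λ ω) ∂μ ≤ ∫ _ω, sSup S ∂μ := by
        exact integral_mono hintφ (integrable_const _) hle
    _ = sSup S := by simp
end

section
/- Let (Ω, μ) be a probability space, A a real p×N matrix, b ∈ ℝ^p, F : ℝ^N → ℝ convex, ε ≥ 0 and γ > 0. Let x̂ : Ω → ℝ^N be measurable with ω ↦ F(x̂(ω)) and ω ↦ ‖A x̂(ω) − b‖ integrable, and suppose ∫ (F(x̂(ω)) − F(x*) + γ‖A x̂(ω) − b‖) dμ(ω) ≤ ε. Suppose x* ∈ ℝ^N and λ* ∈ ℝ^p satisfy the saddle inequality F(z) − F(x*) − ⟨λ*, Az − b⟩ ≥ 0 for all z ∈ ℝ^N, and that ‖λ*‖ < γ. Then ∫ ‖A x̂(ω) − b‖ dμ(ω) ≤ ε/(γ − ‖λ*‖), and −ε‖λ*‖/(γ − ‖λ*‖) ≤ ∫ (F(x̂(ω)) − F(x*)) dμ(ω) ≤ ε. -/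
open MeasureTheory

/-- Lemma 1.3 of the paper. -/
theorem stmt_1
    {Ω : Type*} [MeasurableSpace Ω] (μ : Measure Ω) [IsProbabilityMeasure μ]
    {p N : ℕ}
    (A : EuclideanSpace ℝ (Fin N) →L[ℝ] EuclideanSpace ℝ (Fin p))
    (b : EuclideanSpace ℝ (Fin p))
    (F : EuclideanSpace ℝ (Fin N) → ℝ)
    (hF : ConvexOn ℝ Set.univ F)
    (ε γ : ℝ) (hε : 0 ≤ ε) (hγ : 0 < γ)
    (xhat : Ω → EuclideanSpace ℝ (Fin N)) (hxhat : Measurable xhat)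
    (xstar : EuclideanSpace ℝ (Fin N)) (lamstar : EuclideanSpace ℝ (Fin p))
    (hint1 : Integrable (fun ω => F (xhat ω)) μ)
    (hint2 : Integrable (fun ω => ‖A (xhat ω) - b‖) μ)
    (hbound : ∫ ω, (F (xhat ω) - F xstar + γ * ‖A (xhat ω) - b‖) ∂μ ≤ ε)
    (hsaddle : ∀ z : EuclideanSpace ℝ (Fin N),
      0 ≤ F z - F xstar - inner ℝ lamstar (A z - b))
    (hlam : ‖lamstar‖ < γ) :
    (∫ ω, ‖A (xhat ω) - b‖ ∂μ ≤ ε / (γ - ‖lamstar‖)) ∧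
    (-(ε * ‖lamstar‖) / (γ - ‖lamstar‖) ≤ ∫ ω, (F (xhat ω) - F xstar) ∂μ) ∧
    (∫ ω, (F (xhat ω) - F xstar) ∂μ ≤ ε) := by
  set L := ‖lamstar‖ with hL
  have hg : 0 < γ - L := by linarith
  have hintd : Integrable (fun ω => F (xhat ω) - F xstar) μ :=
    hint1.sub (integrable_const _)
  set I1 := ∫ ω, (F (xhat ω) - F xstar) ∂μ with hI1
  set I2 := ∫ ω, ‖A (xhat ω) - b‖ ∂μ with hI2
  -- pointwise lower bound
  have hpt : ∀ ω, -L * ‖A (xhat ω) - b‖ ≤ F (xhat ω) - F xstar := by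
    intro ω
    have h1 := hsaddle (xhat ω)
    set s : ℝ := inner ℝ lamstar (A (xhat ω) - b) with hs
    have h2 : |s| ≤ L * ‖A (xhat ω) - b‖ := abs_real_inner_le_norm _ _
    have h3 := neg_abs_le s
    linarith
  have hI1ge : -L * I2 ≤ I1 := by
    rw [hI1, hI2, show -L * ∫ ω, ‖A (xhat ω) - b‖ ∂μ
        = ∫ ω, -L * ‖A (xhat ω) - b‖ ∂μ from (integral_const_mul _ _).symm]
    exact integral_mono (hint2.const_mul _) hintd hpt
  have hsum : I1 + γ * I2 ≤ ε := by
    have : ∫ ω, (F (xhat ω) - F xstar + γ * ‖A (xhat ω) - b‖) ∂μ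
        = I1 + γ * I2 := by
      rw [integral_add hintd (hint2.const_mul _), integral_const_mul]
    linarith [hbound, this ▸ hbound]
  have hI2nn : 0 ≤ I2 := integral_nonneg fun ω => norm_nonneg _
  have hI2le : I2 ≤ ε / (γ - L) := by
    rw [le_div_iff₀ hg]; nlinarith
  refine ⟨hI2le, ?_, ?_⟩
  · have : -L * I2 ≥ -L * (ε / (γ - L)) := by
      have hLnn : (0:ℝ) ≤ L := norm_nonneg _
      nlinarith
    have heq : -(ε * L) / (γ - L) = -L * (ε / (γ - L)) := by ring
    linarith [heq ▸ this]
  · nlinarith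
end

section
/- Let f : ℝ^N → ℝ be convex and differentiable with ∇f Lipschitz continuous with constant L_f ≥ 0, let g : ℝ^N → ℝ be μ-strongly convex with μ > 0, and set F := f + g. Let A be a real p×N matrix, b ∈ ℝ^p, β_k ∈ ℝ, ρ_k > 0, and P^k a symmetric positive semidefinite N×N matrix. Let x^k ∈ ℝ^N, λ^k ∈ ℝ^p, r^k := A x^k − b, and suppose x^{k+1} ∈ ℝ^N satisfies the optimality condition: there exists a subgradient v of g at x^{k+1} with ∇f(x^k) − Aᵀ(λ^k − β_k r^k) + v + P^k(x^{k+1} − x^k) = 0. Set r^{k+1} := A x^{k+1} − b and λ^{k+1} := λ^k − ρ_k r^{k+1}. Then for every x ∈ ℝ^N with Ax = b and every λ ∈ ℝ^p: Φ(x^{k+1}, x, λ) ≤ (1/(2ρ_k))(‖λ − λ^k‖² − ‖λ − λ^{k+1}‖² + ‖λ^k − λ^{k+1}‖²) − β_k‖r^{k+1}‖² − (1/2)(‖x^{k+1} − x‖²_{P^k − β_k AᵀA + μI} − ‖x^k − x‖²_{P^k − β_k AᵀA} + ‖x^{k+1} − x^k‖²_{P^k − β_k AᵀA − L_f I}), where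 Φ(x̂, x, λ) := F(x̂) − F(x) − ⟨λ, A x̂ − b⟩. -/
open RealInnerProductSpace

section Aux

open RealInnerProductSpace

variable {E : Type*} [NormedAddCommGroup E] [InnerProductSpace ℝ E] [CompleteSpace E]

lemma line_hasDerivAt (x d : E) (t : ℝ) :
    HasDerivAt (fun t : ℝ => x + t • d) d t := by
  simpa using ((hasDerivAt_id t).smul_const d).const_add x

lemma comp_line_hasDerivAt {f : E → ℝ} {G : E → E} (hf : ∀ z, HasGradientAt f (G z) z)
    (x d : E) (t : ℝ) :
    HasDerivAt (fun t : ℝ => f (x + t • d)) ⟪G (x + t • d), d⟫ t := by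
  have h := ((hf (x + t • d)).hasFDerivAt).comp_hasDerivAt t (line_hasDerivAt x d t)
  simpa [InnerProductSpace.toDual_apply_apply, Function.comp_def] using h

lemma grad_conv_ineq {f : E → ℝ} (hf : ConvexOn ℝ Set.univ f) {x : E} {G : E → E}
    (hG : ∀ z, HasGradientAt f (G z) z) (z : E) :
    f x + ⟪G x, z - x⟫ ≤ f z := by
  have hφ : HasDerivAt (fun t : ℝ => f (x + t • (z - x))) ⟪G x, z - x⟫ 0 := by
    simpa using comp_line_hasDerivAt hG x (z - x) 0
  have hconv : ConvexOn ℝ Set.univ (fun t : ℝ => f (x + t • (z - x))) := by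
    have h2 := hf.comp_affineMap (AffineMap.lineMap x z)
    have he : (fun t : ℝ => f (x + t • (z - x))) = f ∘ (AffineMap.lineMap x z) := by
      funext t
      simp [AffineMap.lineMap_apply, add_comm]
    rw [he]
    simpa using h2
  have hs := hconv.le_slope_of_hasDerivAt (Set.mem_univ (0:ℝ)) (Set.mem_univ (1:ℝ))
    one_pos hφ
  simp [slope] at hs
  linarith

lemma grad_descent {f : E → ℝ} {G : E → E} {Lf : ℝ} (hLf : 0 ≤ Lf)
    (hf : ∀ z, HasGradientAt f (G z) z)
    (hlip : ∀ u v, ‖G u - G v‖ ≤ Lf * ‖u - v‖) (x z : E) :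
    f z ≤ f x + ⟪G x, z - x⟫ + Lf / 2 * ‖z - x‖ ^ 2 := by
  set d := z - x with hdd
  set c : ℝ := ⟪G x, d⟫ with hc
  set q : ℝ := Lf / 2 * ‖d‖ ^ 2 with hq
  have hd : ∀ t : ℝ, HasDerivAt (fun t : ℝ => f (x + t • d) - t * c - t ^ 2 * q)
      (⟪G (x + t • d), d⟫ - c - 2 * t * q) t := by
    intro t
    have h1 := comp_line_hasDerivAt hf x d t
    have h2 : HasDerivAt (fun t : ℝ => t * c) c t := by
      simpa using (hasDerivAt_id t).mul_const c
    have h3 : HasDerivAt (fun t : ℝ => t ^ 2 * q) (2 * t * q) t := by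
      have := (hasDerivAt_pow 2 t).mul_const q
      norm_num at this
      convert this using 1
    exact (h1.sub h2).sub h3
  have hanti : AntitoneOn (fun t : ℝ => f (x + t • d) - t * c - t ^ 2 * q) (Set.Icc 0 1) := by
    refine antitoneOn_of_deriv_nonpos (convex_Icc 0 1)
      (HasDerivAt.continuousOn (fun t _ => hd t))
      (fun t _ => ((hd t).differentiableAt).differentiableWithinAt) ?_
    intro t ht
    rw [interior_Icc] at ht
    rw [(hd t).deriv]
    have hb := real_inner_le_norm (G (x + t • d) - G x) d
    have hl := hlip (x + t • d) x
    rw [add_sub_cancel_left, norm_smul, Real.norm_eq_abs, abs_of_pos ht.1] at hl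
    have hsplit : ⟪G (x + t • d), d⟫ - c = ⟪G (x + t • d) - G x, d⟫ := by
      rw [inner_sub_left]
    have hdn := norm_nonneg d
    nlinarith [norm_nonneg (G (x + t • d) - G x), ht.1.le]
  have h01 := hanti (Set.left_mem_Icc.2 zero_le_one) (Set.right_mem_Icc.2 zero_le_one)
    zero_le_one
  simp only [zero_smul, add_zero, one_smul, zero_mul, one_pow, zero_pow, sub_zero, one_mul] at h01
  have hz : x + d = z := by rw [hdd]; abel
  rw [hz] at h01
  linarith

lemma strong_subgrad {g : E → ℝ} {μ : ℝ} (hμ : 0 < μ)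
    (hg : ConvexOn ℝ Set.univ (fun z => g z - μ / 2 * ‖z‖ ^ 2)) {x0 v : E}
    (hv : ∀ z, g x0 + ⟪v, z - x0⟫ ≤ g z) (z : E) :
    g x0 + ⟪v, z - x0⟫ + μ / 2 * ‖z - x0‖ ^ 2 ≤ g z := by
  set d := z - x0 with hdd
  have hz : z = x0 + d := by rw [hdd]; abel
  refine le_of_forall_pos_le_add fun ε hε => ?_
  set t : ℝ := min 1 (ε / (μ / 2 * ‖d‖ ^ 2 + 1)) with ht
  have ht0 : 0 < t := lt_min one_pos (div_pos hε (by positivity))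
  have ht1 : t ≤ 1 := min_le_left _ _
  have key : g x0 + t * ⟪v, d⟫ ≤ g (x0 + t • d) := by
    have := hv (x0 + t • d)
    rwa [add_sub_cancel_left, real_inner_smul_right] at this
  have hpt : (1 - t) • x0 + t • z = x0 + t • d := by
    rw [hz, smul_add, sub_smul, one_smul]; abel
  have hconv := hg.2 (Set.mem_univ x0) (Set.mem_univ z) (by linarith : (0:ℝ) ≤ 1 - t)
    ht0.le (by ring)
  rw [hpt] at hconv
  simp only [smul_eq_mul] at hconv
  have hn1 : ‖x0 + t • d‖ ^ 2 = ‖x0‖ ^ 2 + 2 * (t * ⟪x0, d⟫) + t ^ 2 * ‖d‖ ^ 2 := by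
    rw [norm_add_sq_real, real_inner_smul_right, norm_smul, Real.norm_eq_abs, mul_pow, sq_abs]
  have hn2 : ‖z‖ ^ 2 = ‖x0‖ ^ 2 + 2 * ⟪x0, d⟫ + ‖d‖ ^ 2 := by rw [hz, norm_add_sq_real]
  rw [hn1, hn2] at hconv
  have main : g x0 + ⟪v, d⟫ + μ / 2 * ‖d‖ ^ 2 ≤ g z + μ / 2 * ‖d‖ ^ 2 * t := by
    by_contra h
    push_neg at h
    nlinarith [mul_pos ht0 (sub_pos.2 h), key, hconv]
  have htb : μ / 2 * ‖d‖ ^ 2 * t ≤ ε := by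
    have h1 : t ≤ ε / (μ / 2 * ‖d‖ ^ 2 + 1) := min_le_right _ _
    have h2 : (0:ℝ) < μ / 2 * ‖d‖ ^ 2 + 1 := by positivity
    rw [le_div_iff₀ h2] at h1
    have hC : (0:ℝ) ≤ μ / 2 * ‖d‖ ^ 2 := by positivity
    nlinarith
  linarith

end Aux

/-- quadratic form `‖v‖²_W = ⟪v, W v⟫` associated to an operator `W`. -/
noncomputable def qform {E : Type*} [NormedAddCommGroup E] [InnerProductSpace ℝ E]
    (W : E →L[ℝ] E) (v : E) : ℝ := inner ℝ v (W v)

set_option maxHeartbeats 2000000 in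
/-- Lemma 2.1 (one-iteration analysis of accelerated proximal Jacobian ADMM). -/
theorem stmt_2
    {p N : ℕ}
    (f g : EuclideanSpace ℝ (Fin N) → ℝ)
    (Gf : EuclideanSpace ℝ (Fin N) → EuclideanSpace ℝ (Fin N))
    (Lf : ℝ) (hLf : 0 ≤ Lf)
    (hfconv : ConvexOn ℝ Set.univ f)
    (hfgrad : ∀ z, HasGradientAt f (Gf z) z)
    (hflip : ∀ u v, ‖Gf u - Gf v‖ ≤ Lf * ‖u - v‖)
    (μ : ℝ) (hμ : 0 < μ)
    (hg : ConvexOn ℝ Set.univ (fun z => g z - μ / 2 * ‖z‖ ^ 2))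
    (A : EuclideanSpace ℝ (Fin N) →L[ℝ] EuclideanSpace ℝ (Fin p))
    (b : EuclideanSpace ℝ (Fin p))
    (βk ρk : ℝ) (hρk : 0 < ρk)
    (P : EuclideanSpace ℝ (Fin N) →L[ℝ] EuclideanSpace ℝ (Fin N))
    (hPsym : ∀ u v, inner ℝ (P u) v = (inner ℝ u (P v) : ℝ))
    (hPpsd : ∀ v, (0 : ℝ) ≤ inner ℝ v (P v))
    (xk xkp : EuclideanSpace ℝ (Fin N)) (lamk : EuclideanSpace ℝ (Fin p))
    (v : EuclideanSpace ℝ (Fin N))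
    (hv : ∀ z, g xkp + inner ℝ v (z - xkp) ≤ g z)
    (hopt : Gf xk - ContinuousLinearMap.adjoint A (lamk - βk • (A xk - b))
        + v + P (xkp - xk) = 0)
    (rkp lamkp : EuclideanSpace ℝ (Fin p))
    (hrkp : rkp = A xkp - b)
    (hlamkp : lamkp = lamk - ρk • rkp)
    (x : EuclideanSpace ℝ (Fin N)) (lam : EuclideanSpace ℝ (Fin p))
    (hx : A x = b) :
    (f xkp + g xkp) - (f x + g x) - inner ℝ lam (A xkp - b)
      ≤ 1 / (2 * ρk) * (‖lam - lamk‖ ^ 2 - ‖lam - lamkp‖ ^ 2 + ‖lamk - lamkp‖ ^ 2)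
        - βk * ‖rkp‖ ^ 2
        - 1 / 2 *
          (qform (P - βk • ((ContinuousLinearMap.adjoint A).comp A) + μ • 1) (xkp - x)
            - qform (P - βk • ((ContinuousLinearMap.adjoint A).comp A)) (xk - x)
            + qform (P - βk • ((ContinuousLinearMap.adjoint A).comp A) - Lf • 1) (xkp - xk)) := by
  -- abbreviations
  set rk : EuclideanSpace ℝ (Fin p) := A xk - b with hrk
  -- basic facts about A applied to differences
  have hAa : A (xkp - x) = rkp := by rw [map_sub, hx, hrkp]
  have hAc : A (xk - x) = rk := by rw [map_sub, hx, hrk]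
  have hAe : A (xkp - xk) = rkp - rk := by
    rw [map_sub, hrkp, hrk]; abel
  -- three convexity/smoothness inequalities
  have h1 : f xk + ⟪Gf xk, x - xk⟫ ≤ f x := grad_conv_ineq hfconv hfgrad x
  have h2 : f xkp ≤ f xk + ⟪Gf xk, xkp - xk⟫ + Lf / 2 * ‖xkp - xk‖ ^ 2 :=
    grad_descent hLf hfgrad hflip xk xkp
  have h3 : g xkp + ⟪v, x - xkp⟫ + μ / 2 * ‖x - xkp‖ ^ 2 ≤ g x :=
    strong_subgrad hμ hg hv x
  -- rewrite optimality condition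
  have hsum : Gf xk + v = ContinuousLinearMap.adjoint A (lamk - βk • rk) - P (xkp - xk) := by
    have h := hopt
    have h5 : Gf xk + v =
        ContinuousLinearMap.adjoint A (lamk - βk • (A xk - b)) - P (xkp - xk) +
        (Gf xk - ContinuousLinearMap.adjoint A (lamk - βk • (A xk - b))
          + v + P (xkp - xk)) := by abel
    rw [h, add_zero] at h5
    rw [h5, hrk]
  -- key inner-product identity from the optimality condition
  have hinner : ⟪Gf xk + v, xkp - x⟫
      = ⟪lamk, rkp⟫ - βk * ⟪rk, rkp⟫ - ⟪P (xkp - xk), xkp - x⟫ := by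
    rw [hsum, inner_sub_left, ContinuousLinearMap.adjoint_inner_left, hAa,
      inner_sub_left, real_inner_smul_left]
  -- combine the three inequalities
  have hmain : (f xkp + g xkp) - (f x + g x) - ⟪lam, rkp⟫
      ≤ ⟪lamk, rkp⟫ - βk * ⟪rk, rkp⟫ - ⟪P (xkp - xk), xkp - x⟫
        + Lf / 2 * ‖xkp - xk‖ ^ 2 - μ / 2 * ‖xkp - x‖ ^ 2 - ⟪lam, rkp⟫ := by
    have e1 : ⟪Gf xk, xkp - xk⟫ - ⟪Gf xk, x - xk⟫ + (- ⟪v, x - xkp⟫)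
        = ⟪Gf xk + v, xkp - x⟫ := by
      rw [← inner_sub_right, ← inner_neg_right, inner_add_left,
        show xkp - xk - (x - xk) = xkp - x from by abel,
        show -(x - xkp) = xkp - x from by abel]
    have e2 : ‖x - xkp‖ = ‖xkp - x‖ := norm_sub_rev _ _
    rw [e2] at h3
    linarith [hinner, e1.symm ▸ hinner]
  -- now show the right-hand side of the goal equals the bound in hmain
  have hlam1 : lam - lamkp = (lam - lamk) + ρk • rkp := by rw [hlamkp]; abel
  have hlam2 : lamk - lamkp = ρk • rkp := by rw [hlamkp]; abel
  have hnl : ‖lam - lamkp‖ ^ 2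
      = ‖lam - lamk‖ ^ 2 + 2 * (ρk * ⟪lam - lamk, rkp⟫) + ρk ^ 2 * ‖rkp‖ ^ 2 := by
    rw [hlam1, norm_add_sq_real, real_inner_smul_right, norm_smul, Real.norm_eq_abs,
      mul_pow, sq_abs]
  have hnl2 : ‖lamk - lamkp‖ ^ 2 = ρk ^ 2 * ‖rkp‖ ^ 2 := by
    rw [hlam2, norm_smul, Real.norm_eq_abs, mul_pow, sq_abs]
  -- expand the quadratic forms
  have hqW : ∀ u : EuclideanSpace ℝ (Fin N),
      qform (P - βk • ((ContinuousLinearMap.adjoint A).comp A)) u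
        = ⟪u, P u⟫ - βk * ‖A u‖ ^ 2 := fun u => by
    simp only [qform, ContinuousLinearMap.sub_apply, ContinuousLinearMap.smul_apply,
      ContinuousLinearMap.comp_apply, inner_sub_right, real_inner_smul_right,
      ContinuousLinearMap.adjoint_inner_right, real_inner_self_eq_norm_sq]
  have hq2 : qform (P - βk • ((ContinuousLinearMap.adjoint A).comp A) + μ • 1) (xkp - x)
      = ⟪xkp - x, P (xkp - x)⟫ - βk * ‖A (xkp - x)‖ ^ 2 + μ * ‖xkp - x‖ ^ 2 := by
    have h : ∀ u : EuclideanSpace ℝ (Fin N),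
        qform (P - βk • ((ContinuousLinearMap.adjoint A).comp A) + μ • 1) u
          = qform (P - βk • ((ContinuousLinearMap.adjoint A).comp A)) u + μ * ‖u‖ ^ 2 := by
      intro u
      simp only [qform, ContinuousLinearMap.add_apply, ContinuousLinearMap.smul_apply,
        ContinuousLinearMap.one_apply, inner_add_right, real_inner_smul_right,
        real_inner_self_eq_norm_sq]
    rw [h, hqW]
  have hq3 : qform (P - βk • ((ContinuousLinearMap.adjoint A).comp A) - Lf • 1) (xkp - xk)
      = ⟪xkp - xk, P (xkp - xk)⟫ - βk * ‖A (xkp - xk)‖ ^ 2 - Lf * ‖xkp - xk‖ ^ 2 := by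
    have h : ∀ u : EuclideanSpace ℝ (Fin N),
        qform (P - βk • ((ContinuousLinearMap.adjoint A).comp A) - Lf • 1) u
          = qform (P - βk • ((ContinuousLinearMap.adjoint A).comp A)) u - Lf * ‖u‖ ^ 2 := by
      intro u
      have : (P - βk • ((ContinuousLinearMap.adjoint A).comp A) - Lf • 1) u
          = (P - βk • ((ContinuousLinearMap.adjoint A).comp A)) u - Lf • u := by
        simp [ContinuousLinearMap.sub_apply]
      simp only [qform, this, inner_sub_right, real_inner_smul_right,
        real_inner_self_eq_norm_sq]
    rw [h, hqW]
  -- P cross terms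
  have hPe : ⟪xkp - xk, P (xkp - xk)⟫
      = ⟪xkp - x, P (xkp - x)⟫ - 2 * ⟪xkp - x, P (xk - x)⟫ + ⟪xk - x, P (xk - x)⟫ := by
    have hsplit : xkp - xk = (xkp - x) - (xk - x) := by abel
    rw [hsplit, map_sub, inner_sub_left, inner_sub_right, inner_sub_right]
    have hsymm : ⟪xk - x, P (xkp - x)⟫ = ⟪xkp - x, P (xk - x)⟫ := by
      rw [← hPsym, real_inner_comm]
    rw [hsymm]; ring
  have hPea : ⟪P (xkp - xk), xkp - x⟫
      = ⟪xkp - x, P (xkp - x)⟫ - ⟪xkp - x, P (xk - x)⟫ := by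
    have hsplit : xkp - xk = (xkp - x) - (xk - x) := by abel
    rw [real_inner_comm, hsplit, map_sub, inner_sub_right]
  -- A cross terms
  have hAq : ‖A (xkp - xk)‖ ^ 2 = ‖rkp‖ ^ 2 - 2 * ⟪rk, rkp⟫ + ‖rk‖ ^ 2 := by
    rw [hAe, norm_sub_sq_real, real_inner_comm rkp rk]
  have hAq1 : ‖A (xkp - x)‖ ^ 2 = ‖rkp‖ ^ 2 := by rw [hAa]
  have hAq2 : ‖A (xk - x)‖ ^ 2 = ‖rk‖ ^ 2 := by rw [hAc]
  -- expand lam inner products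
  have hll : ⟪lam - lamk, rkp⟫ = ⟪lam, rkp⟫ - ⟪lamk, rkp⟫ := inner_sub_left _ _ _
  have hlampart : 1 / (2 * ρk) * (‖lam - lamk‖ ^ 2 - ‖lam - lamkp‖ ^ 2 + ‖lamk - lamkp‖ ^ 2)
      = ⟪lamk, rkp⟫ - ⟪lam, rkp⟫ := by
    rw [hnl, hnl2, hll]
    field_simp
    ring
  rw [hPea] at hmain
  rw [← hrkp, hlampart, hq2, hqW (xk - x), hq3, hPe, hAq, hAq1, hAq2]
  linarith [hmain]
end

section
/- In the setting of the accelerated proximal Jacobian ADMM with parameters β_k = ρ_k = kβ, P^k = kP + L_f I (β > 0, P symmetric with P − βAᵀA positive definite and ⪯ (μ/2)I, k₀ := 2L_f/μ), where f is convex differentiable with L_f-Lipschitz gradient, g is μ-strongly convex (μ > 0), F := f + g, the iterates satisfy λ¹ = 0, λ^{k+1} = λ^k − ρ_k(Ax^{k+1} − b), and for each k ≥ 1 there is a subgradient v of g at x^{k+1} with ∇f(x^k) − Aᵀ(λ^k − β_k(Ax^k − b)) + v + P^k(x^{k+1} − x^k) = 0, and there exists a KKT point (x*, λ*) (i.e.,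 a subgradient w of F at x* with w = Aᵀλ* and Ax* = b): setting γ := max{2‖λ*‖, 1 + ‖λ*‖}, T := t(t+2k₀+3)/2, and x̄^{t+1} := (1/T) ∑_{k=1}^t (k+k₀+1) x^{k+1}, one has |F(x̄^{t+1}) − F(x*)| ≤ (1/T) sup_{‖λ‖ ≤ γ} φ₁(x*, λ) and ‖A x̄^{t+1} − b‖ ≤ (1/(T·max{1, ‖λ*‖})) sup_{‖λ‖ ≤ γ} φ₁(x*, λ), where φ₁(x, λ) := ((k₀+2)/(2β))‖λ‖² + ((k₀+2)/2)‖x¹ − x‖²_{P + L_f I − β AᵀA}. -/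
open Set Filter Topology

section AuxAnalysis

variable {E : Type*} [NormedAddCommGroup E] [InnerProductSpace ℝ E]

lemma my_combo_normsq (x y : E) (s : ℝ) :
    ‖(1 - s) • x + s • y‖ ^ 2
      = (1 - s) * ‖x‖ ^ 2 + s * ‖y‖ ^ 2 - s * (1 - s) * ‖x - y‖ ^ 2 := by
  rw [norm_add_sq_real, norm_sub_sq_real, norm_smul, norm_smul,
    real_inner_smul_left, real_inner_smul_right]
  simp only [Real.norm_eq_abs, mul_pow, sq_abs]
  ring

lemma my_line_deriv [CompleteSpace E] (f : E → ℝ) (Gf : E → E)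
    (hfgrad : ∀ z, HasGradientAt f (Gf z) z) (x d : E) (s : ℝ) :
    HasDerivAt (fun s : ℝ => f (x + s • d)) (inner ℝ (Gf (x + s • d)) d) s := by
  have hline : HasDerivAt (fun s : ℝ => x + s • d) d s := by
    simpa using ((hasDerivAt_id s).smul_const d).const_add x
  have := (hfgrad (x + s • d)).hasFDerivAt.comp_hasDerivAt s hline
  simp [InnerProductSpace.toDual_apply_apply] at this
  exact this

lemma my_convex_grad_ineq [CompleteSpace E] (f : E → ℝ) (Gf : E → E)
    (hfconv : ConvexOn ℝ Set.univ f)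
    (hfgrad : ∀ z, HasGradientAt f (Gf z) z) (x u : E) :
    f x + inner ℝ (Gf x) (u - x) ≤ f u := by
  set φ : ℝ → ℝ := fun s => f (x + s • (u - x)) with hφ
  have hder : HasDerivAt φ (inner ℝ (Gf x) (u - x)) 0 := by
    simpa using my_line_deriv f Gf hfgrad x (u - x) 0
  have htend := hasDerivAt_iff_tendsto_slope.1 hder
  have htend' : Tendsto (slope φ 0) (𝓝[>] 0) (𝓝 (inner ℝ (Gf x) (u - x))) :=
    htend.mono_left (nhdsWithin_mono 0 (by intro s hs; exact ne_of_gt hs))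
  have hev : ∀ᶠ s in 𝓝[>] (0:ℝ), slope φ 0 s ≤ f u - f x := by
    filter_upwards [Ioc_mem_nhdsGT_of_mem (Set.mem_Ico.2 ⟨le_refl (0:ℝ), one_pos⟩)]
      with s hs
    obtain ⟨hs0, hs1⟩ := hs
    have hcomb := hfconv.2 (Set.mem_univ x) (Set.mem_univ u)
      (by linarith : (0:ℝ) ≤ 1 - s) (le_of_lt hs0) (by ring)
    have hpt : x + s • (u - x) = (1 - s) • x + s • u := by
      rw [smul_sub, sub_smul, one_smul]; abel
    have hφs : φ s ≤ (1 - s) * f x + s * f u := by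
      rw [hφ]; simpa [hpt] using hcomb
    have hφ0 : φ 0 = f x := by simp [hφ]
    rw [slope_def_field]
    have : (φ s - φ 0) / (s - 0) ≤ f u - f x := by
      rw [hφ0, sub_zero, div_le_iff₀ hs0]
      nlinarith
    simpa [div_eq_inv_mul] using this
  have := le_of_tendsto htend' hev
  linarith

lemma my_descent_lemma [CompleteSpace E] (f : E → ℝ) (Gf : E → E) (Lf : ℝ)
    (hfgrad : ∀ z, HasGradientAt f (Gf z) z)
    (hflip : ∀ u v, ‖Gf u - Gf v‖ ≤ Lf * ‖u - v‖) (x d : E) :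
    f (x + d) ≤ f x + inner ℝ (Gf x) d + Lf / 2 * ‖d‖ ^ 2 := by
  set φ : ℝ → ℝ := fun s => f (x + s • d) - s * inner ℝ (Gf x) d - s ^ 2 * (Lf / 2) * ‖d‖ ^ 2
    with hφ
  have hder : ∀ s : ℝ, HasDerivAt φ
      ((inner ℝ (Gf (x + s • d)) d : ℝ) - inner ℝ (Gf x) d - s * Lf * ‖d‖ ^ 2) s := by
    intro s
    have h1 := my_line_deriv f Gf hfgrad x d s
    have h2 : HasDerivAt (fun s : ℝ => s * (inner ℝ (Gf x) d : ℝ)) (inner ℝ (Gf x) d) s := by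
      simpa using (hasDerivAt_id s).mul_const (inner ℝ (Gf x) d : ℝ)
    have h3 : HasDerivAt (fun s : ℝ => s ^ 2 * (Lf / 2) * ‖d‖ ^ 2)
        (s * Lf * ‖d‖ ^ 2) s := by
      have := ((hasDerivAt_pow 2 s).mul_const (Lf / 2)).mul_const (‖d‖ ^ 2)
      exact this.congr_deriv (by push_cast; ring)
    have h4 := (h1.sub h2).sub h3
    exact h4
  have hmono : AntitoneOn φ (Set.Icc 0 1) := by
    apply antitoneOn_of_deriv_nonpos (convex_Icc 0 1)
    · exact fun s _ => ((hder s).continuousAt).continuousWithinAt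
    · intro s _
      exact ((hder s).differentiableAt).differentiableWithinAt
    · intro s hs
      rw [interior_Icc] at hs
      rw [(hder s).deriv]
      have hi : (inner ℝ (Gf (x + s • d)) d : ℝ) - inner ℝ (Gf x) d
          = inner ℝ (Gf (x + s • d) - Gf x) d := by rw [inner_sub_left]
      have hcs : (inner ℝ (Gf (x + s • d) - Gf x) d : ℝ) ≤ Lf * (s * ‖d‖) * ‖d‖ := by
        calc (inner ℝ (Gf (x + s • d) - Gf x) d : ℝ)
            ≤ ‖Gf (x + s • d) - Gf x‖ * ‖d‖ := real_inner_le_norm _ _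
          _ ≤ Lf * ‖x + s • d - x‖ * ‖d‖ := by
              apply mul_le_mul_of_nonneg_right (hflip _ _) (norm_nonneg d)
          _ = Lf * (s * ‖d‖) * ‖d‖ := by
              rw [add_sub_cancel_left, norm_smul, Real.norm_eq_abs,
                abs_of_pos hs.1]
      rw [hi]
      nlinarith [hs.1.le]
  have h01 := hmono (Set.mem_Icc.2 ⟨le_refl (0:ℝ), zero_le_one⟩)
    (Set.mem_Icc.2 ⟨zero_le_one, le_refl (1:ℝ)⟩) zero_le_one
  have hφ0 : φ 0 = f x := by simp [hφ]
  have hφ1 : φ 1 = f (x + d) - inner ℝ (Gf x) d - Lf / 2 * ‖d‖ ^ 2 := by simp [hφ]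
  rw [hφ0, hφ1] at h01
  linarith

lemma my_strong_subgrad (g : E → ℝ) (μ : ℝ) (hμ : 0 < μ)
    (hg : ConvexOn ℝ Set.univ (fun z => g z - μ / 2 * ‖z‖ ^ 2))
    (x v : E) (hv : ∀ z, g x + inner ℝ v (z - x) ≤ g z) (z : E) :
    g x + inner ℝ v (z - x) + μ / 2 * ‖z - x‖ ^ 2 ≤ g z := by
  have key : ∀ s : ℝ, s ∈ Set.Ioc (0:ℝ) 1 →
      g x + inner ℝ v (z - x) + μ / 2 * (1 - s) * ‖z - x‖ ^ 2 ≤ g z := by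
    intro s hs
    obtain ⟨hs0, hs1⟩ := hs
    set zs : E := (1 - s) • x + s • z with hzs
    have hcomb := hg.2 (Set.mem_univ x) (Set.mem_univ z)
      (by linarith : (0:ℝ) ≤ 1 - s) (le_of_lt hs0) (by ring)
    simp only [smul_eq_mul] at hcomb
    have hns := my_combo_normsq x z s
    have hgzs : g zs ≤ (1 - s) * g x + s * g z - μ / 2 * (s * (1 - s) * ‖x - z‖ ^ 2) := by
      have h := hcomb
      rw [← hzs] at h
      nlinarith [h]
    have hsub := hv zs
    have hzsx : zs - x = s • (z - x) := by
      rw [hzs, smul_sub, sub_smul, one_smul]; abel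
    rw [hzsx, real_inner_smul_right] at hsub
    have hnorm : ‖x - z‖ = ‖z - x‖ := norm_sub_rev x z
    rw [hnorm] at hgzs
    have h2 : s * (g x + inner ℝ v (z - x) + μ / 2 * (1 - s) * ‖z - x‖ ^ 2) ≤ s * g z := by
      nlinarith [hsub, hgzs]
    exact le_of_mul_le_mul_left (by linarith [h2]) hs0
  have htend : Tendsto (fun s : ℝ => g x + inner ℝ v (z - x) + μ / 2 * (1 - s) * ‖z - x‖ ^ 2)
      (𝓝[>] 0) (𝓝 (g x + inner ℝ v (z - x) + μ / 2 * ‖z - x‖ ^ 2)) := by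
    have h : ContinuousAt
        (fun s : ℝ => g x + inner ℝ v (z - x) + μ / 2 * (1 - s) * ‖z - x‖ ^ 2) 0 := by
      fun_prop
    simpa using h.continuousWithinAt.tendsto
  have hev : ∀ᶠ s in 𝓝[>] (0:ℝ),
      g x + inner ℝ v (z - x) + μ / 2 * (1 - s) * ‖z - x‖ ^ 2 ≤ g z := by
    filter_upwards [Ioc_mem_nhdsGT_of_mem (Set.mem_Ico.2 ⟨le_refl (0:ℝ), one_pos⟩)]
      with s hs using key s hs
  exact le_of_tendsto htend hev

lemma my_qform_expand (W : E →L[ℝ] E) (hW : ∀ u v, inner ℝ (W u) v = (inner ℝ u (W v) : ℝ))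
    (y d : E) :
    qform W (y - d) = qform W y - 2 * inner ℝ y (W d) + qform W d := by
  simp only [qform, map_sub, inner_sub_left, inner_sub_right]
  have h : (inner ℝ d (W y) : ℝ) = inner ℝ y (W d) := by
    rw [← hW d y, real_inner_comm]
  rw [h]; ring

lemma my_tele_sum (G : ℕ → ℝ) (t : ℕ) :
    ∑ k ∈ Finset.Icc 1 t, (G k - G (k + 1)) = G 1 - G (t + 1) := by
  induction t with
  | zero => simp
  | succ n ih =>
      rw [Finset.sum_Icc_succ_top (Nat.le_add_left 1 n), ih]
      ring

lemma my_gauss_sum (c : ℝ) (t : ℕ) :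
    ∑ k ∈ Finset.Icc 1 t, ((k : ℝ) + c) = t * (t + 2 * c + 1) / 2 := by
  induction t with
  | zero => simp
  | succ n ih =>
      rw [Finset.sum_Icc_succ_top (Nat.le_add_left 1 n), ih]
      push_cast
      ring

lemma my_coeff_dual (k k₀ β : ℝ) (hk : 1 ≤ k) (hk₀ : 0 ≤ k₀) (hβ : 0 < β)
    (C : ℝ) (hC : 0 ≤ C) :
    ((k + 1) + k₀ + 1) / (2 * (k + 1) * β) * C ≤ (k + k₀ + 1) / (2 * k * β) * C := by
  apply mul_le_mul_of_nonneg_right _ hC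
  rw [div_le_div_iff₀ (by positivity) (by positivity)]
  nlinarith

lemma my_coeff_primal (k k₀ μ Lf q n : ℝ) (hk : 1 ≤ k) (hk₀ : 0 ≤ k₀) (hμ : 0 < μ)
    (hLfk : Lf = k₀ * μ / 2) (hq : q ≤ μ / 2 * n) (hq0 : 0 ≤ q) :
    ((k + 1) + k₀ + 1) * ((k + 1) * q + Lf * n)
      ≤ (k + k₀ + 1) * (k * q + Lf * n) + (k + k₀ + 1) * μ * n := by
  have h : (0 : ℝ) ≤ (2 * k + k₀ + 2) * (μ / 2 * n - q) :=
    mul_nonneg (by linarith) (by linarith)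
  subst hLfk
  nlinarith [h]

variable {F : Type*} [NormedAddCommGroup F] [InnerProductSpace ℝ F]
variable [CompleteSpace E] [CompleteSpace F]

lemma my_onestep
    (f g : E → ℝ) (Gf : E → E) (Lf μ β k₀ : ℝ) (hμ : 0 < μ) (hβ : 0 < β) (hk₀ : 0 ≤ k₀)
    (hLfk : Lf = k₀ * μ / 2)
    (hfconv : ConvexOn ℝ Set.univ f) (hfgrad : ∀ z, HasGradientAt f (Gf z) z)
    (hflip : ∀ u v, ‖Gf u - Gf v‖ ≤ Lf * ‖u - v‖)
    (hg : ConvexOn ℝ Set.univ fun z => g z - μ / 2 * ‖z‖ ^ 2)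
    (A : E →L[ℝ] F) (b : F) (P : E →L[ℝ] E)
    (M : E →L[ℝ] E) (hM : M = P - β • ((ContinuousLinearMap.adjoint A).comp A))
    (hMsym : ∀ u v, inner ℝ (M u) v = (inner ℝ u (M v) : ℝ))
    (hMnonneg : ∀ v, 0 ≤ qform M v)
    (hMle : ∀ v, qform M v ≤ μ / 2 * ‖v‖ ^ 2)
    (xstar : E) (hfeas : A xstar = b)
    (x : ℕ → E) (lamseq : ℕ → F) (k : ℕ) (hk : 1 ≤ k)
    (v : E) (hv : ∀ z, g (x (k + 1)) + inner ℝ v (z - x (k + 1)) ≤ g z)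
    (heq : Gf (x k) - (ContinuousLinearMap.adjoint A)
        (lamseq k - ((k : ℝ) * β) • (A (x k) - b))
      + v + ((k : ℝ) • P + Lf • (1 : E →L[ℝ] E)) (x (k + 1) - x k) = 0)
    (hlamk : lamseq (k + 1) = lamseq k - ((k : ℝ) * β) • (A (x (k + 1)) - b))
    (lam : F) :
    ((k : ℝ) + k₀ + 1) * ((f (x (k + 1)) + g (x (k + 1))) - (f xstar + g xstar)
        + inner ℝ lam (A (x (k + 1)) - b))
      ≤ (((k : ℝ) + k₀ + 1) / (2 * (k : ℝ) * β) * ‖lam + lamseq k‖ ^ 2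
          + ((k : ℝ) + k₀ + 1) / 2 *
            ((k : ℝ) * qform M (x k - xstar) + Lf * ‖x k - xstar‖ ^ 2))
        - ((((k : ℝ) + 1) + k₀ + 1) / (2 * ((k : ℝ) + 1) * β) * ‖lam + lamseq (k + 1)‖ ^ 2
          + (((k : ℝ) + 1) + k₀ + 1) / 2 *
            (((k : ℝ) + 1) * qform M (x (k + 1) - xstar) + Lf * ‖x (k + 1) - xstar‖ ^ 2)) := by
  have hLf : 0 ≤ Lf := by rw [hLfk]; positivity
  have hkpos : (0 : ℝ) < (k : ℝ) := by exact_mod_cast hk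
  set d : E := x (k + 1) - x k with hd
  set y : E := x (k + 1) - xstar with hy
  set yk : E := x k - xstar with hyk
  set r : F := A (x (k + 1)) - b with hr
  have hykd : yk = y - d := by rw [hy, hyk, hd]; abel
  have F1 : f (x (k + 1)) ≤ f xstar + inner ℝ (Gf (x k)) y + Lf / 2 * ‖d‖ ^ 2 := by
    have F1a := my_descent_lemma f Gf Lf hfgrad hflip (x k) d
    rw [show x k + d = x (k + 1) by rw [hd]; abel] at F1a
    have F1b := my_convex_grad_ineq f Gf hfconv hfgrad (x k) xstar
    have hyd : (inner ℝ (Gf (x k)) y : ℝ)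
        = inner ℝ (Gf (x k)) d - inner ℝ (Gf (x k)) (xstar - x k) := by
      rw [← inner_sub_right]
      congr 1
      rw [hy, hd]; abel
    rw [hyd]; linarith
  have F2 : g (x (k + 1)) - inner ℝ v y + μ / 2 * ‖y‖ ^ 2 ≤ g xstar := by
    have h := my_strong_subgrad g μ hμ hg (x (k + 1)) v hv xstar
    have h1 : xstar - x (k + 1) = -y := by rw [hy]; abel
    rw [h1, inner_neg_right, norm_neg] at h
    linarith
  have hGfv : Gf (x k) + v
      = (ContinuousLinearMap.adjoint A) (lamseq k - ((k : ℝ) * β) • (A (x k) - b))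
        - ((k : ℝ) • P + Lf • (1 : E →L[ℝ] E)) d := by
    apply sub_eq_zero.mp
    rw [← heq]; abel
  have hAy : A y = r := by rw [hy, hr, map_sub, hfeas]
  have hAd : A d = A (x (k + 1)) - A (x k) := by rw [hd, map_sub]
  have hlamk' : lamseq k - ((k : ℝ) * β) • (A (x k) - b)
      = lamseq (k + 1) + ((k : ℝ) * β) • (A d) := by
    rw [hlamk, hAd, hr]; module
  have F3 : (inner ℝ (Gf (x k)) y : ℝ) + inner ℝ v y
      = inner ℝ (lamseq (k + 1)) r - (k : ℝ) * inner ℝ y (M d) - Lf * inner ℝ y d := by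
    rw [← inner_add_left, hGfv, inner_sub_left, ContinuousLinearMap.adjoint_inner_left,
      hAy, hlamk', inner_add_left, real_inner_smul_left]
    have hPd : ((k : ℝ) • P + Lf • (1 : E →L[ℝ] E)) d = (k : ℝ) • (P d) + Lf • d := by
      simp [ContinuousLinearMap.add_apply]
    have hPdM : P d = M d + β • ((ContinuousLinearMap.adjoint A) (A d)) := by
      rw [hM]; simp [ContinuousLinearMap.sub_apply]
    rw [hPd, hPdM]
    simp only [inner_add_left, real_inner_smul_left, ContinuousLinearMap.adjoint_inner_left]
    have h1 : (inner ℝ (A d) (A y) : ℝ) = inner ℝ (A d) r := by rw [hAy]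
    have h2 : (inner ℝ (M d) y : ℝ) = inner ℝ y (M d) := real_inner_comm _ _
    have h3 : (inner ℝ d y : ℝ) = inner ℝ y d := real_inner_comm _ _
    rw [h1, h2, h3]
    ring
  have F4 : ‖lam + lamseq k‖ ^ 2
      = ‖lam + lamseq (k + 1)‖ ^ 2 + 2 * ((k : ℝ) * β) * inner ℝ (lam + lamseq (k + 1)) r
        + ((k : ℝ) * β) ^ 2 * ‖r‖ ^ 2 := by
    have h : lamseq k = lamseq (k + 1) + ((k : ℝ) * β) • r := by rw [hlamk]; module
    rw [h, ← add_assoc, norm_add_sq_real (lam + lamseq (k + 1)) (((k : ℝ) * β) • r)]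
    simp [norm_smul, mul_pow, sq_abs, real_inner_smul_right]
    ring
  have F5 : qform M yk = qform M y - 2 * inner ℝ y (M d) + qform M d := by
    rw [hykd, my_qform_expand M hMsym]
  have F6 : ‖yk‖ ^ 2 = ‖y‖ ^ 2 - 2 * inner ℝ y d + ‖d‖ ^ 2 := by
    rw [hykd, norm_sub_sq_real]
  have key : (inner ℝ (lamseq (k + 1)) r : ℝ) + inner ℝ lam r
      = (‖lam + lamseq k‖ ^ 2 - ‖lam + lamseq (k + 1)‖ ^ 2) / (2 * (k : ℝ) * β)
        - ((k : ℝ) * β) / 2 * ‖r‖ ^ 2 := by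
    have hIlam : (inner ℝ (lam + lamseq (k + 1)) r : ℝ)
        = inner ℝ lam r + inner ℝ (lamseq (k + 1)) r := inner_add_left _ _ _
    rw [F4, hIlam]
    field_simp
    ring
  have e3 : -(k : ℝ) * inner ℝ y (M d)
      = (k : ℝ) / 2 * (qform M yk - qform M y) - (k : ℝ) / 2 * qform M d := by
    linear_combination (-(k : ℝ) / 2) * F5
  have e4 : -Lf * inner ℝ y d + Lf / 2 * ‖d‖ ^ 2 = Lf / 2 * (‖yk‖ ^ 2 - ‖y‖ ^ 2) := by
    linear_combination (-Lf / 2) * F6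
  have hq0 : (0 : ℝ) ≤ (k : ℝ) / 2 * qform M d := by
    have := hMnonneg d; positivity
  have hr0 : (0 : ℝ) ≤ ((k : ℝ) * β) / 2 * ‖r‖ ^ 2 := by positivity
  have hGap : (f (x (k + 1)) + g (x (k + 1))) - (f xstar + g xstar) + inner ℝ lam r
      ≤ (‖lam + lamseq k‖ ^ 2 - ‖lam + lamseq (k + 1)‖ ^ 2) / (2 * (k : ℝ) * β)
        + (k : ℝ) / 2 * (qform M yk - qform M y)
        + Lf / 2 * (‖yk‖ ^ 2 - ‖y‖ ^ 2) - μ / 2 * ‖y‖ ^ 2 := by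
    linarith [F1, F2, F3, key, e3, e4, hq0, hr0]
  have hwk : (0 : ℝ) < (k : ℝ) + k₀ + 1 := by linarith
  have hmul := mul_le_mul_of_nonneg_left hGap hwk.le
  apply le_trans hmul
  have hdual := my_coeff_dual (k : ℝ) k₀ β (by exact_mod_cast hk) hk₀ hβ
    (‖lam + lamseq (k + 1)‖ ^ 2) (sq_nonneg _)
  have hprimal := my_coeff_primal (k : ℝ) k₀ μ Lf (qform M y) (‖y‖ ^ 2)
    (by exact_mod_cast hk) hk₀ hμ hLfk (hMle y) (hMnonneg y)
  have expand : ((k : ℝ) + k₀ + 1) *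
        ((‖lam + lamseq k‖ ^ 2 - ‖lam + lamseq (k + 1)‖ ^ 2) / (2 * (k : ℝ) * β)
          + (k : ℝ) / 2 * (qform M yk - qform M y)
          + Lf / 2 * (‖yk‖ ^ 2 - ‖y‖ ^ 2) - μ / 2 * ‖y‖ ^ 2)
      = ((k : ℝ) + k₀ + 1) / (2 * (k : ℝ) * β) * ‖lam + lamseq k‖ ^ 2
        - ((k : ℝ) + k₀ + 1) / (2 * (k : ℝ) * β) * ‖lam + lamseq (k + 1)‖ ^ 2
        + ((k : ℝ) + k₀ + 1) / 2 * ((k : ℝ) * qform M yk + Lf * ‖yk‖ ^ 2)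
        - (((k : ℝ) + k₀ + 1) / 2 * ((k : ℝ) * qform M y + Lf * ‖y‖ ^ 2)
            + ((k : ℝ) + k₀ + 1) * μ / 2 * ‖y‖ ^ 2) := by
    field_simp
    ring
  rw [expand]
  linarith [hdual, hprimal]

end AuxAnalysis


set_option maxHeartbeats 2000000

/-- Theorem 2.3 of the paper (rate of order 1/t²), ergodic part. -/
theorem stmt_5
    {p N : ℕ}
    (f g : EuclideanSpace ℝ (Fin N) → ℝ)
    (Gf : EuclideanSpace ℝ (Fin N) → EuclideanSpace ℝ (Fin N))
    (Lf : ℝ) (hLf : 0 ≤ Lf)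
    (hfconv : ConvexOn ℝ Set.univ f)
    (hfgrad : ∀ z, HasGradientAt f (Gf z) z)
    (hflip : ∀ u v, ‖Gf u - Gf v‖ ≤ Lf * ‖u - v‖)
    (μ : ℝ) (hμ : 0 < μ)
    (hg : ConvexOn ℝ Set.univ (fun z => g z - μ / 2 * ‖z‖ ^ 2))
    (A : EuclideanSpace ℝ (Fin N) →L[ℝ] EuclideanSpace ℝ (Fin p))
    (b : EuclideanSpace ℝ (Fin p))
    (β : ℝ) (hβ : 0 < β)
    (P : EuclideanSpace ℝ (Fin N) →L[ℝ] EuclideanSpace ℝ (Fin N))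
    (hPsym : ∀ u v, inner ℝ (P u) v = (inner ℝ u (P v) : ℝ))
    (hPpos : ∀ v, v ≠ 0 →
      0 < qform (P - β • ((ContinuousLinearMap.adjoint A).comp A)) v)
    (hPle : ∀ v,
      qform (P - β • ((ContinuousLinearMap.adjoint A).comp A)) v ≤ μ / 2 * ‖v‖ ^ 2)
    (xstar : EuclideanSpace ℝ (Fin N)) (lamstar : EuclideanSpace ℝ (Fin p))
    (w : EuclideanSpace ℝ (Fin N))
    (hw : ∀ z, (f xstar + g xstar) + inner ℝ w (z - xstar) ≤ f z + g z)
    (hkkt : w = ContinuousLinearMap.adjoint A lamstar)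
    (hfeas : A xstar = b)
    (x : ℕ → EuclideanSpace ℝ (Fin N)) (lamseq : ℕ → EuclideanSpace ℝ (Fin p))
    (hlam1 : lamseq 1 = 0)
    (hiter : ∀ k : ℕ, 1 ≤ k → ∃ v : EuclideanSpace ℝ (Fin N),
      (∀ z, g (x (k + 1)) + inner ℝ v (z - x (k + 1)) ≤ g z) ∧
      Gf (x k) - ContinuousLinearMap.adjoint A
          (lamseq k - ((k : ℝ) * β) • (A (x k) - b))
        + v + ((k : ℝ) • P + Lf • 1) (x (k + 1) - x k) = 0)
    (hlam : ∀ k : ℕ, 1 ≤ k →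
      lamseq (k + 1) = lamseq k - ((k : ℝ) * β) • (A (x (k + 1)) - b))
    (t : ℕ) (ht : 1 ≤ t)
    (k₀ T γ : ℝ)
    (hk₀def : k₀ = 2 * Lf / μ)
    (hT : T = (t : ℝ) * ((t : ℝ) + 2 * k₀ + 3) / 2)
    (hγ : γ = max (2 * ‖lamstar‖) (1 + ‖lamstar‖))
    (xbar : EuclideanSpace ℝ (Fin N))
    (hxbar : xbar = (1 / T) • ∑ k ∈ Finset.Icc 1 t, (((k : ℝ) + k₀ + 1) • x (k + 1))) :
    |(f xbar + g xbar) - (f xstar + g xstar)|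
        ≤ (1 / T) * sSup ((fun lam : EuclideanSpace ℝ (Fin p) =>
            (k₀ + 2) / (2 * β) * ‖lam‖ ^ 2 + (k₀ + 2) / 2 *
              qform (P + Lf • 1 - β • ((ContinuousLinearMap.adjoint A).comp A)) (x 1 - xstar))
            '' {l | ‖l‖ ≤ γ}) ∧
    ‖A xbar - b‖
        ≤ (1 / (T * max 1 ‖lamstar‖)) * sSup ((fun lam : EuclideanSpace ℝ (Fin p) =>
            (k₀ + 2) / (2 * β) * ‖lam‖ ^ 2 + (k₀ + 2) / 2 *
              qform (P + Lf • 1 - β • ((ContinuousLinearMap.adjoint A).comp A)) (x 1 - xstar))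
            '' {l | ‖l‖ ≤ γ}) := by
  classical
  set M : EuclideanSpace ℝ (Fin N) →L[ℝ] EuclideanSpace ℝ (Fin N) :=
    P - β • ((ContinuousLinearMap.adjoint A).comp A) with hM
  have hMsym : ∀ u v, inner ℝ (M u) v = (inner ℝ u (M v) : ℝ) := by
    intro u v
    rw [hM]
    simp only [ContinuousLinearMap.sub_apply, ContinuousLinearMap.smul_apply,
      ContinuousLinearMap.comp_apply, inner_sub_left, inner_sub_right,
      real_inner_smul_left, real_inner_smul_right]
    rw [hPsym u v, ContinuousLinearMap.adjoint_inner_left,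
      ContinuousLinearMap.adjoint_inner_right]
  have hMnonneg : ∀ v, 0 ≤ qform M v := by
    intro v
    by_cases h : v = 0
    · simp [h, qform]
    · exact (hPpos v h).le
  have hMle : ∀ v, qform M v ≤ μ / 2 * ‖v‖ ^ 2 := hPle
  have hk₀ : 0 ≤ k₀ := by rw [hk₀def]; positivity
  have hLfk : Lf = k₀ * μ / 2 := by rw [hk₀def]; field_simp
  have hop : P + Lf • (1 : EuclideanSpace ℝ (Fin N) →L[ℝ] EuclideanSpace ℝ (Fin N))
      - β • ((ContinuousLinearMap.adjoint A).comp A) = M + Lf • 1 := by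
    rw [hM]; abel
  have hqsplit : qform (M + Lf • (1 : EuclideanSpace ℝ (Fin N) →L[ℝ]
        EuclideanSpace ℝ (Fin N))) (x 1 - xstar)
      = qform M (x 1 - xstar) + Lf * ‖x 1 - xstar‖ ^ 2 := by
    have happ : (M + Lf • (1 : EuclideanSpace ℝ (Fin N) →L[ℝ] EuclideanSpace ℝ (Fin N)))
        (x 1 - xstar) = M (x 1 - xstar) + Lf • (x 1 - xstar) := by
      simp only [ContinuousLinearMap.add_apply, ContinuousLinearMap.smul_apply,
        ContinuousLinearMap.one_apply]
    simp only [qform, happ, inner_add_right, real_inner_smul_right,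
      real_inner_self_eq_norm_sq]
  set φ1 : EuclideanSpace ℝ (Fin p) → ℝ := fun lam =>
    (k₀ + 2) / (2 * β) * ‖lam‖ ^ 2 + (k₀ + 2) / 2 *
      qform (P + Lf • 1 - β • ((ContinuousLinearMap.adjoint A).comp A)) (x 1 - xstar)
    with hφ1
  set S : ℝ := sSup (φ1 '' {l | ‖l‖ ≤ γ}) with hSdef
  set Φ : EuclideanSpace ℝ (Fin p) → ℕ → ℝ := fun lam j =>
    ((j : ℝ) + k₀ + 1) / (2 * (j : ℝ) * β) * ‖lam + lamseq j‖ ^ 2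
      + ((j : ℝ) + k₀ + 1) / 2 *
        ((j : ℝ) * qform M (x j - xstar) + Lf * ‖x j - xstar‖ ^ 2) with hΦ
  have step : ∀ (lam : EuclideanSpace ℝ (Fin p)), ∀ k : ℕ, 1 ≤ k →
      ((k : ℝ) + k₀ + 1) * ((f (x (k + 1)) + g (x (k + 1))) - (f xstar + g xstar)
          + inner ℝ lam (A (x (k + 1)) - b))
        ≤ Φ lam k - Φ lam (k + 1) := by
    intro lam k hk
    obtain ⟨v, hv, heqk⟩ := hiter k hk
    have h := my_onestep f g Gf Lf μ β k₀ hμ hβ hk₀ hLfk hfconv hfgrad hflip hg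
      A b P M hM hMsym hMnonneg hMle xstar hfeas x lamseq k hk v hv heqk (hlam k hk) lam
    simp only [hΦ]
    push_cast
    linarith [h]
  have sumstep : ∀ lam : EuclideanSpace ℝ (Fin p), ∑ k ∈ Finset.Icc 1 t,
      (((k : ℝ) + k₀ + 1) * ((f (x (k + 1)) + g (x (k + 1))) - (f xstar + g xstar)
        + inner ℝ lam (A (x (k + 1)) - b)))
      ≤ Φ lam 1 - Φ lam (t + 1) := by
    intro lam
    rw [← my_tele_sum (Φ lam) t]
    apply Finset.sum_le_sum
    intro k hk
    exact step lam k (Finset.mem_Icc.mp hk).1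
  have hLf0 : 0 ≤ Lf := hLf
  have hΦnonneg : ∀ (lam : EuclideanSpace ℝ (Fin p)) (j : ℕ), 0 ≤ Φ lam j := by
    intro lam j
    simp only [hΦ]
    have hq := hMnonneg (x j - xstar)
    refine add_nonneg (mul_nonneg (div_nonneg (by positivity) (by positivity))
      (sq_nonneg _)) (mul_nonneg (by positivity) (add_nonneg
        (mul_nonneg (by positivity) hq) (mul_nonneg hLf0 (sq_nonneg _))))
  have hΦ1eq : ∀ lam : EuclideanSpace ℝ (Fin p), Φ lam 1 = φ1 lam := by
    intro lam
    simp only [hΦ, hφ1, Nat.cast_one, hlam1, add_zero, one_mul]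
    rw [hop, hqsplit]
    ring
  have hTw : ∑ k ∈ Finset.Icc 1 t, ((k : ℝ) + k₀ + 1) = T := by
    have h := my_gauss_sum (k₀ + 1) t
    rw [hT]
    calc ∑ k ∈ Finset.Icc 1 t, ((k : ℝ) + k₀ + 1)
        = ∑ k ∈ Finset.Icc 1 t, ((k : ℝ) + (k₀ + 1)) := by
          apply Finset.sum_congr rfl; intro k _; ring
      _ = (t : ℝ) * ((t : ℝ) + 2 * (k₀ + 1) + 1) / 2 := h
      _ = (t : ℝ) * ((t : ℝ) + 2 * k₀ + 3) / 2 := by ring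
  have ht1 : (1 : ℝ) ≤ (t : ℝ) := by exact_mod_cast ht
  have hTpos : 0 < T := by rw [hT]; nlinarith
  have hTne : T ≠ 0 := ne_of_gt hTpos
  -- convexity of f + g
  have hnormsq : ConvexOn ℝ Set.univ
      (fun z : EuclideanSpace ℝ (Fin N) => μ / 2 * ‖z‖ ^ 2) := by
    refine ⟨convex_univ, ?_⟩
    intro u _ w' _ a c ha hc hac
    have ha' : a = 1 - c := by linarith
    subst ha'
    have h := my_combo_normsq u w' c
    simp only [smul_eq_mul]
    rw [h]
    nlinarith [mul_nonneg (mul_nonneg hc (by linarith : (0:ℝ) ≤ 1 - c))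
      (sq_nonneg ‖u - w'‖)]
  have hgconv : ConvexOn ℝ Set.univ g := by
    have h := hg.add hnormsq
    have he : (fun z : EuclideanSpace ℝ (Fin N) => g z - μ / 2 * ‖z‖ ^ 2)
        + (fun z : EuclideanSpace ℝ (Fin N) => μ / 2 * ‖z‖ ^ 2) = g := by
      funext z; simp only [Pi.add_apply]; ring
    rwa [he] at h
  have hFconv : ConvexOn ℝ Set.univ
      (fun z : EuclideanSpace ℝ (Fin N) => f z + g z) := hfconv.add hgconv
  have hw'0 : ∀ k ∈ Finset.Icc 1 t, 0 ≤ ((k : ℝ) + k₀ + 1) / T := by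
    intro k _; positivity
  have hw'1 : ∑ k ∈ Finset.Icc 1 t, ((k : ℝ) + k₀ + 1) / T = 1 := by
    rw [← Finset.sum_div, hTw, div_self hTne]
  have hxbar' : xbar = ∑ k ∈ Finset.Icc 1 t, ((((k : ℝ) + k₀ + 1) / T) • x (k + 1)) := by
    rw [hxbar, Finset.smul_sum]
    apply Finset.sum_congr rfl
    intro k _
    rw [smul_smul]
    congr 1
    ring
  have hjensen : f xbar + g xbar ≤ ∑ k ∈ Finset.Icc 1 t,
      (((k : ℝ) + k₀ + 1) / T) * (f (x (k + 1)) + g (x (k + 1))) := by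
    have h := hFconv.map_sum_le (t := Finset.Icc 1 t)
      (w := fun k => ((k : ℝ) + k₀ + 1) / T) (p := fun k => x (k + 1))
      hw'0 hw'1 (fun i _ => Set.mem_univ _)
    rw [hxbar']
    simpa [smul_eq_mul] using h
  have hAxbar : A xbar - b = ∑ k ∈ Finset.Icc 1 t,
      ((((k : ℝ) + k₀ + 1) / T) • (A (x (k + 1)) - b)) := by
    have h1 : A xbar = ∑ k ∈ Finset.Icc 1 t,
        ((((k : ℝ) + k₀ + 1) / T) • A (x (k + 1))) := by
      rw [hxbar', map_sum]
      apply Finset.sum_congr rfl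
      intro k _
      rw [map_smul]
    have hb : b = ∑ k ∈ Finset.Icc 1 t, ((((k : ℝ) + k₀ + 1) / T) • b) := by
      rw [← Finset.sum_smul, hw'1, one_smul]
    rw [h1]
    conv_lhs => rw [hb]
    rw [← Finset.sum_sub_distrib]
    apply Finset.sum_congr rfl
    intro k _
    rw [smul_sub]
  have master : ∀ lam : EuclideanSpace ℝ (Fin p),
      T * ((f xbar + g xbar) - (f xstar + g xstar) + inner ℝ lam (A xbar - b))
        ≤ φ1 lam := by
    intro lam
    have hs := sumstep lam
    have hΦt := hΦnonneg lam (t + 1)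
    rw [hΦ1eq lam] at hs
    have hinner : (inner ℝ lam (A xbar - b) : ℝ)
        = ∑ k ∈ Finset.Icc 1 t, (((k : ℝ) + k₀ + 1) / T) *
            inner ℝ lam (A (x (k + 1)) - b) := by
      rw [hAxbar, inner_sum]
      apply Finset.sum_congr rfl
      intro k _
      rw [real_inner_smul_right]
    have hTF : T * (f xbar + g xbar) ≤ ∑ k ∈ Finset.Icc 1 t,
        ((k : ℝ) + k₀ + 1) * (f (x (k + 1)) + g (x (k + 1))) := by
      have h2 := mul_le_mul_of_nonneg_left hjensen hTpos.le
      calc T * (f xbar + g xbar)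
          ≤ T * ∑ k ∈ Finset.Icc 1 t,
            (((k : ℝ) + k₀ + 1) / T) * (f (x (k + 1)) + g (x (k + 1))) := h2
        _ = ∑ k ∈ Finset.Icc 1 t,
            ((k : ℝ) + k₀ + 1) * (f (x (k + 1)) + g (x (k + 1))) := by
            rw [Finset.mul_sum]
            apply Finset.sum_congr rfl
            intro k _
            field_simp
    have hTI : T * (inner ℝ lam (A xbar - b) : ℝ) = ∑ k ∈ Finset.Icc 1 t,
        ((k : ℝ) + k₀ + 1) * inner ℝ lam (A (x (k + 1)) - b) := by
      rw [hinner, Finset.mul_sum]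
      apply Finset.sum_congr rfl
      intro k _
      field_simp
    have hTstar : T * (f xstar + g xstar) = ∑ k ∈ Finset.Icc 1 t,
        ((k : ℝ) + k₀ + 1) * (f xstar + g xstar) := by
      rw [← Finset.sum_mul, hTw]
    have hsplit : ∑ k ∈ Finset.Icc 1 t,
        (((k : ℝ) + k₀ + 1) * ((f (x (k + 1)) + g (x (k + 1))) - (f xstar + g xstar)
          + inner ℝ lam (A (x (k + 1)) - b)))
        = (∑ k ∈ Finset.Icc 1 t, ((k : ℝ) + k₀ + 1) * (f (x (k + 1)) + g (x (k + 1))))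
          - (∑ k ∈ Finset.Icc 1 t, ((k : ℝ) + k₀ + 1) * (f xstar + g xstar))
          + ∑ k ∈ Finset.Icc 1 t, ((k : ℝ) + k₀ + 1) * inner ℝ lam (A (x (k + 1)) - b) := by
      rw [← Finset.sum_sub_distrib, ← Finset.sum_add_distrib]
      apply Finset.sum_congr rfl
      intro k _
      ring
    nlinarith [hs, hΦt, hTF, hTI, hTstar, hsplit]
  -- sup facts
  have hγ1 : 1 ≤ γ := by
    rw [hγ]
    have h1 := norm_nonneg lamstar
    have h2 := le_max_right (2 * ‖lamstar‖) (1 + ‖lamstar‖)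
    linarith
  have hγ0 : 0 ≤ γ := by linarith
  have hq1 : 0 ≤ qform (P + Lf • 1 - β • ((ContinuousLinearMap.adjoint A).comp A))
      (x 1 - xstar) := by
    rw [hop, hqsplit]
    exact add_nonneg (hMnonneg _) (mul_nonneg hLf0 (sq_nonneg _))
  have hbdd : BddAbove (φ1 '' {l | ‖l‖ ≤ γ}) := by
    refine ⟨(k₀ + 2) / (2 * β) * γ ^ 2 + (k₀ + 2) / 2 *
      qform (P + Lf • 1 - β • ((ContinuousLinearMap.adjoint A).comp A)) (x 1 - xstar), ?_⟩
    rintro y ⟨l, hl, rfl⟩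
    simp only [Set.mem_setOf_eq] at hl
    have h2 : ‖l‖ ^ 2 ≤ γ ^ 2 := by nlinarith [norm_nonneg l]
    have hc1 : (0:ℝ) ≤ (k₀ + 2) / (2 * β) := by positivity
    simp only [hφ1]
    nlinarith [mul_le_mul_of_nonneg_left h2 hc1]
  have hleS : ∀ lam : EuclideanSpace ℝ (Fin p), ‖lam‖ ≤ γ → φ1 lam ≤ S :=
    fun lam h => le_csSup hbdd ⟨lam, h, rfl⟩
  have hS0 : 0 ≤ S := by
    have h0 : φ1 0 ≤ S := hleS 0 (by rw [norm_zero]; linarith)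
    have h1 : 0 ≤ φ1 0 := by
      simp only [hφ1, norm_zero]
      nlinarith [mul_nonneg (show (0:ℝ) ≤ (k₀ + 2) / 2 by positivity) hq1]
    linarith
  -- KKT lower bound
  have hDlow : (inner ℝ lamstar (A xbar - b) : ℝ)
      ≤ (f xbar + g xbar) - (f xstar + g xstar) := by
    have h := hw xbar
    rw [hkkt, ContinuousLinearMap.adjoint_inner_left] at h
    have h2 : A (xbar - xstar) = A xbar - b := by rw [map_sub, hfeas]
    rw [h2] at h
    linarith
  have hmax1 : (1 : ℝ) ≤ max 1 ‖lamstar‖ := le_max_left _ _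
  have hmaxpos : (0 : ℝ) < max 1 ‖lamstar‖ := by linarith
  have hγsub : γ - ‖lamstar‖ = max 1 ‖lamstar‖ := by
    rw [hγ]
    rcases le_total 1 ‖lamstar‖ with h | h
    · rw [max_eq_left (by linarith), max_eq_right h]; ring
    · rw [max_eq_right (by linarith), max_eq_left h]; ring
  -- feasibility bound
  have hfeas_bound : ‖A xbar - b‖ ≤ 1 / (T * max 1 ‖lamstar‖) * S := by
    rcases eq_or_ne (A xbar - b) 0 with hz | hz
    · rw [hz, norm_zero]; positivity
    · have hnR : 0 < ‖A xbar - b‖ := norm_pos_iff.mpr hz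
      set lam : EuclideanSpace ℝ (Fin p) := (γ / ‖A xbar - b‖) • (A xbar - b) with hlamdef
      have hnl : ‖lam‖ = γ := by
        rw [hlamdef, norm_smul, Real.norm_eq_abs, abs_of_nonneg (by positivity),
          div_mul_cancel₀ _ (ne_of_gt hnR)]
      have hIl : (inner ℝ lam (A xbar - b) : ℝ) = γ * ‖A xbar - b‖ := by
        rw [hlamdef, real_inner_smul_left, real_inner_self_eq_norm_sq]
        field_simp
      have hm := master lam
      have hm2 : T * (((f xbar + g xbar) - (f xstar + g xstar)) + γ * ‖A xbar - b‖)
          ≤ S := by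
        rw [← hIl]
        exact le_trans hm (hleS lam (le_of_eq hnl))
      have hcs : -(‖lamstar‖ * ‖A xbar - b‖) ≤ (inner ℝ lamstar (A xbar - b) : ℝ) := by
        have h := abs_real_inner_le_norm lamstar (A xbar - b)
        have h2 := neg_abs_le (inner ℝ lamstar (A xbar - b) : ℝ)
        linarith
      have hD2 : -(‖lamstar‖ * ‖A xbar - b‖)
          ≤ (f xbar + g xbar) - (f xstar + g xstar) := le_trans hcs hDlow
      have hfin : T * ((max 1 ‖lamstar‖) * ‖A xbar - b‖) ≤ S := by
        have h3 : T * ((γ - ‖lamstar‖) * ‖A xbar - b‖)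
            ≤ T * (((f xbar + g xbar) - (f xstar + g xstar)) + γ * ‖A xbar - b‖) := by
          apply mul_le_mul_of_nonneg_left _ hTpos.le
          nlinarith [hD2]
        rw [hγsub] at h3
        linarith
      have h4 : ‖A xbar - b‖ ≤ S / (T * max 1 ‖lamstar‖) := by
        rw [le_div_iff₀ (by positivity)]
        nlinarith [hfin]
      have h5 : 1 / (T * max 1 ‖lamstar‖) * S = S / (T * max 1 ‖lamstar‖) := by ring
      linarith
  -- objective bound
  have hup : (f xbar + g xbar) - (f xstar + g xstar) ≤ 1 / T * S := by
    have hm := master 0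
    have hz : (inner ℝ (0 : EuclideanSpace ℝ (Fin p)) (A xbar - b) : ℝ) = 0 :=
      inner_zero_left _
    have h0 : φ1 0 ≤ S := hleS 0 (by rw [norm_zero]; linarith)
    have hm2 : T * ((f xbar + g xbar) - (f xstar + g xstar)) ≤ S := by
      nlinarith [hm, h0]
    rw [show (1:ℝ) / T * S = S / T by ring, le_div_iff₀ hTpos]
    linarith
  have hlow : -(1 / T * S) ≤ (f xbar + g xbar) - (f xstar + g xstar) := by
    have hcs : -(‖lamstar‖ * ‖A xbar - b‖) ≤ (inner ℝ lamstar (A xbar - b) : ℝ) := by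
      have h := abs_real_inner_le_norm lamstar (A xbar - b)
      have h2 := neg_abs_le (inner ℝ lamstar (A xbar - b) : ℝ)
      linarith
    have h2 : ‖lamstar‖ * ‖A xbar - b‖ ≤ ‖lamstar‖ * (1 / (T * max 1 ‖lamstar‖) * S) :=
      mul_le_mul_of_nonneg_left hfeas_bound (norm_nonneg _)
    have h3 : ‖lamstar‖ * (1 / (T * max 1 ‖lamstar‖) * S) ≤ 1 / T * S := by
      have he : ‖lamstar‖ * (1 / (T * max 1 ‖lamstar‖) * S)
          = (‖lamstar‖ / max 1 ‖lamstar‖) * (S / T) := by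
        field_simp
      have hle1 : ‖lamstar‖ / max 1 ‖lamstar‖ ≤ 1 :=
        (div_le_one hmaxpos).mpr (le_max_right _ _)
      have hST : 0 ≤ S / T := by positivity
      calc ‖lamstar‖ * (1 / (T * max 1 ‖lamstar‖) * S)
          = (‖lamstar‖ / max 1 ‖lamstar‖) * (S / T) := he
        _ ≤ 1 * (S / T) := mul_le_mul_of_nonneg_right hle1 hST
        _ = 1 / T * S := by ring
    linarith [hDlow]
  exact ⟨abs_le.mpr ⟨hlow, hup⟩, hfeas_bound⟩
end

section
/- Let 1 ≤ m ≤ M be integers, θ := m/M, μ > 0, L_m ≥ 0, ρ ≥ 1, t ≥ 2 an integer, and A a nonzero real p×N matrix with spectral norm ‖A‖₂. Set k₀ := 4/θ + 2L_m/(θμ); β_k := μ(θk + 2 + θ)/(2ρ‖A‖₂²) for k ≥ 1; ρ_k := θβ_k/(6 − 5θ) for 1 ≤ k ≤ t−1 and ρ_t := (t+k₀+1)ρ_{t−1}/(θ(t+k₀+1) − 1); η_k := ρβ_k‖A‖₂² + L_m for k ≥ 1. Then the following all hold: (a) θ(k+k₀+1) ≥ 1 for all k ≥ 2; (b) (β_{k−1}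 − ρ_{k−1})(k+k₀) ≥ (1−θ)(k+k₀+1)β_k for 2 ≤ k ≤ t; (c) (θ(k+k₀+1) − 1)/ρ_{k−1} ≥ (θ(k+k₀+2) − 1)/ρ_k for 2 ≤ k ≤ t−1; (d) (θ(t+k₀+1) − 1)/ρ_{t−1} ≥ (t+k₀+1)/ρ_t; (e) β_k(k+k₀+1) ≥ β_{k−1}(k+k₀) for 2 ≤ k ≤ t; (f) (k+k₀+1)(η_k − L_m) I ⪰ β_k(k+k₀+1) AᵀA for 1 ≤ k ≤ t; (g) (k+k₀)η_{k−1} + μ(θ(k+k₀+1) − 1) ≥ (k+k₀+1)η_k for 2 ≤ k ≤ t. -/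
set_option maxHeartbeats 4000000 in
/-- Proposition 3.4 of the paper (the specific parameters satisfy (4.4)). -/
theorem stmt_8
    {M m p N : ℕ} (hm : 1 ≤ m) (hmM : m ≤ M)
    (θ : ℝ) (hθ : θ = (m : ℝ) / M)
    (μ Lm ρ : ℝ) (hμ : 0 < μ) (hLm : 0 ≤ Lm) (hρ : 1 ≤ ρ)
    (t : ℕ) (ht : 2 ≤ t)
    (A : EuclideanSpace ℝ (Fin N) →L[ℝ] EuclideanSpace ℝ (Fin p)) (hA : A ≠ 0)
    (k₀ : ℝ) (hk₀ : k₀ = 4 / θ + 2 * Lm / (θ * μ))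
    (β ρseq η : ℕ → ℝ)
    (hβ : ∀ k : ℕ, 1 ≤ k → β k = μ * (θ * k + 2 + θ) / (2 * ρ * ‖A‖ ^ 2))
    (hρ1 : ∀ k : ℕ, 1 ≤ k → k ≤ t - 1 → ρseq k = θ * β k / (6 - 5 * θ))
    (hρt : ρseq t = ((t : ℝ) + k₀ + 1) * ρseq (t - 1) / (θ * ((t : ℝ) + k₀ + 1) - 1))
    (hη : ∀ k : ℕ, 1 ≤ k → η k = ρ * β k * ‖A‖ ^ 2 + Lm) :
    (∀ k : ℕ, 2 ≤ k → 1 ≤ θ * ((k : ℝ) + k₀ + 1)) ∧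
    (∀ k : ℕ, 2 ≤ k → k ≤ t →
      (1 - θ) * ((k : ℝ) + k₀ + 1) * β k ≤ (β (k - 1) - ρseq (k - 1)) * ((k : ℝ) + k₀)) ∧
    (∀ k : ℕ, 2 ≤ k → k ≤ t - 1 →
      (θ * ((k : ℝ) + k₀ + 2) - 1) / ρseq k ≤ (θ * ((k : ℝ) + k₀ + 1) - 1) / ρseq (k - 1)) ∧
    (((t : ℝ) + k₀ + 1) / ρseq t ≤ (θ * ((t : ℝ) + k₀ + 1) - 1) / ρseq (t - 1)) ∧
    (∀ k : ℕ, 2 ≤ k → k ≤ t →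
      β (k - 1) * ((k : ℝ) + k₀) ≤ β k * ((k : ℝ) + k₀ + 1)) ∧
    (∀ k : ℕ, 1 ≤ k → k ≤ t → ∀ v : EuclideanSpace ℝ (Fin N),
      β k * ((k : ℝ) + k₀ + 1) * ‖A v‖ ^ 2
        ≤ ((k : ℝ) + k₀ + 1) * (η k - Lm) * ‖v‖ ^ 2) ∧
    (∀ k : ℕ, 2 ≤ k → k ≤ t →
      ((k : ℝ) + k₀ + 1) * η k
        ≤ ((k : ℝ) + k₀) * η (k - 1) + μ * (θ * ((k : ℝ) + k₀ + 1) - 1)) := by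
  have hM : (0:ℝ) < M := by
    have : 1 ≤ M := le_trans hm hmM
    exact_mod_cast Nat.lt_of_lt_of_le Nat.zero_lt_one this
  have hm' : (1:ℝ) ≤ m := by exact_mod_cast hm
  have hθpos : 0 < θ := by rw [hθ]; positivity
  have hθ1 : θ ≤ 1 := by
    rw [hθ, div_le_one hM]; exact_mod_cast hmM
  have hAn : 0 < ‖A‖ := norm_pos_iff.mpr hA
  have hρ0 : (0:ℝ) < ρ := lt_of_lt_of_le one_pos hρ
  set c : ℝ := μ / (2 * ρ * ‖A‖ ^ 2) with hc_def
  have hc : 0 < c := by positivity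
  have hβ' : ∀ k : ℕ, 1 ≤ k → β k = c * (θ * k + 2 + θ) := by
    intro k hk
    rw [hβ k hk, hc_def]; ring
  have hk0 : θ * k₀ = 4 + 2 * Lm / μ := by
    rw [hk₀]; field_simp
  have hk0' : 4 ≤ θ * k₀ := by
    rw [hk0]; have : 0 ≤ 2 * Lm / μ := by positivity
    linarith
  have hk0pos : 0 < k₀ := by rw [hk₀]; positivity
  have hk04 : 4 ≤ k₀ := by
    nlinarith [mul_nonneg (sub_nonneg.mpr hθ1) hk0pos.le]
  have hμk0 : μ * (θ * k₀) = 4 * μ + 2 * Lm := by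
    rw [hk0]; field_simp
  have h6 : (0:ℝ) < 6 - 5 * θ := by linarith
  -- part (a)
  have parta : ∀ k : ℕ, 2 ≤ k → 1 ≤ θ * ((k : ℝ) + k₀ + 1) := by
    intro k hk
    have hk2 : (2:ℝ) ≤ k := by exact_mod_cast hk
    nlinarith
  refine ⟨parta, ?_, ?_, ?_, ?_, ?_, ?_⟩
  · -- part (b)
    intro k hk hkt
    have hk2 : (2:ℝ) ≤ k := by exact_mod_cast hk
    have hcast : ((k - 1 : ℕ) : ℝ) = (k:ℝ) - 1 := by
      push_cast [Nat.cast_sub (by omega : 1 ≤ k)]; ring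
    rw [hβ' k (by omega), hρ1 (k-1) (by omega) (by omega), hβ' (k-1) (by omega), hcast]
    set x : ℝ := (k:ℝ)
    have key : c * (θ * (x - 1) + 2 + θ) - θ * (c * (θ * (x - 1) + 2 + θ)) / (6 - 5 * θ)
        = c * (θ * x + 2) * (6 - 6 * θ) / (6 - 5 * θ) := by
      rw [eq_div_iff h6.ne', sub_mul, div_mul_cancel₀ _ h6.ne']; ring
    rw [key, show c * (θ * x + 2) * (6 - 6 * θ) / (6 - 5 * θ) * (x + k₀)
        = c * (θ * x + 2) * (6 - 6 * θ) * (x + k₀) / (6 - 5 * θ) from by ring,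
      le_div_iff₀ h6]
    have hX : 4 ≤ θ * (x + k₀ + 1) := by nlinarith
    have hP : 0 ≤ 6 * (θ * x + 2) * (x + k₀) - (6 - 5 * θ) * (θ * x + 2 + θ) * (x + k₀ + 1) := by
      nlinarith [mul_nonneg (by nlinarith : (0:ℝ) ≤ θ * x - 2 * θ)
        (by nlinarith : (0:ℝ) ≤ 5 * (θ * (x + k₀ + 1)) - 6),
        mul_nonneg hθpos.le (by nlinarith : (0:ℝ) ≤ θ * (x + k₀ + 1) - 4)]
    nlinarith [mul_nonneg (mul_nonneg hc.le (by linarith : (0:ℝ) ≤ 1 - θ)) hP]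
  · -- part (c)
    intro k hk hkt
    have hk2 : (2:ℝ) ≤ k := by exact_mod_cast hk
    have hcast : ((k - 1 : ℕ) : ℝ) = (k:ℝ) - 1 := by
      push_cast [Nat.cast_sub (by omega : 1 ≤ k)]; ring
    have hρk : ρseq k = θ * c * (θ * (k:ℝ) + 2 + θ) / (6 - 5 * θ) := by
      rw [hρ1 k (by omega) hkt, hβ' k (by omega)]; ring
    have hρk1 : ρseq (k - 1) = θ * c * (θ * ((k:ℝ) - 1) + 2 + θ) / (6 - 5 * θ) := by
      rw [hρ1 (k-1) (by omega) (by omega), hβ' (k-1) (by omega), hcast]; ring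
    rw [hρk, hρk1]
    set x : ℝ := (k:ℝ)
    have hP1 : 0 < θ * c * (θ * x + 2 + θ) := by
      apply mul_pos (mul_pos hθpos hc); nlinarith
    have hP0 : 0 < θ * c * (θ * (x - 1) + 2 + θ) := by
      apply mul_pos (mul_pos hθpos hc); nlinarith
    rw [div_div_eq_mul_div, div_div_eq_mul_div, div_le_div_iff₀ hP1 hP0]
    nlinarith [mul_nonneg (mul_nonneg (mul_nonneg h6.le (mul_pos hθpos hc).le) hθpos.le)
        (show (0:ℝ) ≤ θ * k₀ + θ - 3 by nlinarith)]
  · -- part (d)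
    have ht2 : (2:ℝ) ≤ t := by exact_mod_cast ht
    have htc : ((t - 1 : ℕ) : ℝ) = (t:ℝ) - 1 := by
      push_cast [Nat.cast_sub (by omega : 1 ≤ t)]; ring
    have hρpos : 0 < ρseq (t - 1) := by
      rw [hρ1 (t-1) (by omega) (by omega), hβ' (t-1) (by omega), htc]
      apply div_pos _ h6
      apply mul_pos hθpos; apply mul_pos hc; nlinarith
    have hT : 0 < θ * ((t:ℝ) + k₀ + 1) - 1 := by nlinarith
    have hTpos : 0 < (t:ℝ) + k₀ + 1 := by nlinarith
    have key : ((t:ℝ) + k₀ + 1) /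
        (((t:ℝ) + k₀ + 1) * ρseq (t - 1) / (θ * ((t:ℝ) + k₀ + 1) - 1))
        = (θ * ((t:ℝ) + k₀ + 1) - 1) / ρseq (t - 1) := by
      rw [div_div_eq_mul_div, div_eq_div_iff (by positivity) hρpos.ne']
      ring
    rw [hρt, key]
  · -- part (e)
    intro k hk hkt
    have hk2 : (2:ℝ) ≤ k := by exact_mod_cast hk
    have hcast : ((k - 1 : ℕ) : ℝ) = (k:ℝ) - 1 := by
      push_cast [Nat.cast_sub (by omega : 1 ≤ k)]; ring
    rw [hβ' k (by omega), hβ' (k-1) (by omega), hcast]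
    nlinarith [mul_pos hc hθpos, mul_pos hc (mul_pos hθpos (show (0:ℝ) < (k:ℝ) + k₀ by nlinarith))]
  · -- part (f)
    intro k hk hkt v
    have hk1 : (1:ℝ) ≤ k := by exact_mod_cast hk
    rw [hη k hk, hβ' k hk]
    have hAv : ‖A v‖ ≤ ‖A‖ * ‖v‖ := A.le_opNorm v
    have hAv2 : ‖A v‖ ^ 2 ≤ (‖A‖ * ‖v‖) ^ 2 :=
      pow_le_pow_left₀ (norm_nonneg _) hAv 2
    have hβk : 0 < c * (θ * (k:ℝ) + 2 + θ) := by
      apply mul_pos hc; nlinarith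
    have hA2 : ‖A v‖ ^ 2 ≤ ρ * (‖A‖ ^ 2 * ‖v‖ ^ 2) := by
      rw [mul_pow] at hAv2
      exact le_trans hAv2 (le_mul_of_one_le_left (by positivity) hρ)
    calc c * (θ * (k:ℝ) + 2 + θ) * ((k:ℝ) + k₀ + 1) * ‖A v‖ ^ 2
        ≤ c * (θ * (k:ℝ) + 2 + θ) * ((k:ℝ) + k₀ + 1) * (ρ * (‖A‖ ^ 2 * ‖v‖ ^ 2)) := by
          apply mul_le_mul_of_nonneg_left hA2
          have : (0:ℝ) < (k:ℝ) + k₀ + 1 := by nlinarith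
          positivity
      _ = ((k:ℝ) + k₀ + 1) * (ρ * (c * (θ * (k:ℝ) + 2 + θ)) * ‖A‖ ^ 2 + Lm - Lm) * ‖v‖ ^ 2 := by
          ring
  · -- part (g)
    intro k hk hkt
    have hk2 : (2:ℝ) ≤ k := by exact_mod_cast hk
    have hcast : ((k - 1 : ℕ) : ℝ) = (k:ℝ) - 1 := by
      push_cast [Nat.cast_sub (by omega : 1 ≤ k)]; ring
    rw [hη k (by omega), hη (k-1) (by omega), hβ' k (by omega), hβ' (k-1) (by omega), hcast]
    have hrc : ρ * c * ‖A‖ ^ 2 = μ / 2 := by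
      rw [hc_def]; field_simp
    have e1 : ρ * (c * (θ * (k:ℝ) + 2 + θ)) * ‖A‖ ^ 2 = μ / 2 * (θ * (k:ℝ) + 2 + θ) := by
      rw [← hrc]; ring
    have e2 : ρ * (c * (θ * ((k:ℝ) - 1) + 2 + θ)) * ‖A‖ ^ 2
        = μ / 2 * (θ * ((k:ℝ) - 1) + 2 + θ) := by
      rw [← hrc]; ring
    rw [e1, e2]
    linarith [hμk0, (mul_pos hμ hθpos).le]
end

section
/- Let A be a real p×N matrix, t ≥ 1 an integer, θ ∈ (0,1], μ ≥ 0, L_m ≥ 0, k₀ ≥ 0, and real sequences (β_k)_{k≥1} with β_k ≥ 0 and (η_k)_{k≥1} satisfying: β_k(k+k₀+1) ≥ β_{k−1}(k+k₀) for all 2 ≤ k ≤ t; (k+k₀+1)(η_k − L_m) I ⪰ β_k(k+k₀+1) AᵀA for all 1 ≤ k ≤ t; and (k+k₀)η_{k−1} + μ(θ(k+k₀+1) − 1) ≥ (k+k₀+1)η_k for all 2 ≤ k ≤ t. Then for any vectors x¹, …, x^{t+1}, x ∈ ℝ^N: −∑_{k=1}^t (k+k₀+1)( Δ_{η_k I −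 β_k AᵀA}(x^{k+1}, x^k, x) − (L_m/2)‖x^{k+1} − x^k‖² ) − (μ(t+k₀+1)/2)‖x^{t+1} − x‖² − ∑_{k=2}^t (μ(θ(k+k₀+1) − 1)/2)‖x^k − x‖² ≤ (η₁(k₀+2)/2)‖x¹ − x‖² − ((t+k₀+1)/2)‖x^{t+1} − x‖²_{(μ+η_t) I − β_t AᵀA}. -/
/-- Proposition B.1 of the paper. -/
theorem stmt_9
    {p N : ℕ}
    (A : EuclideanSpace ℝ (Fin N) →L[ℝ] EuclideanSpace ℝ (Fin p))
    (t : ℕ) (ht : 1 ≤ t)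
    (θ : ℝ) (hθ0 : 0 < θ) (hθ1 : θ ≤ 1)
    (μ Lm k₀ : ℝ) (hμ : 0 ≤ μ) (hLm : 0 ≤ Lm) (hk₀ : 0 ≤ k₀)
    (β η : ℕ → ℝ) (hβnn : ∀ k, 0 ≤ β k)
    (hβmono : ∀ k : ℕ, 2 ≤ k → k ≤ t →
      β (k - 1) * ((k : ℝ) + k₀) ≤ β k * ((k : ℝ) + k₀ + 1))
    (hmat : ∀ k : ℕ, 1 ≤ k → k ≤ t → ∀ v : EuclideanSpace ℝ (Fin N),
      β k * ((k : ℝ) + k₀ + 1) * ‖A v‖ ^ 2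
        ≤ ((k : ℝ) + k₀ + 1) * (η k - Lm) * ‖v‖ ^ 2)
    (hηmono : ∀ k : ℕ, 2 ≤ k → k ≤ t →
      ((k : ℝ) + k₀ + 1) * η k
        ≤ ((k : ℝ) + k₀) * η (k - 1) + μ * (θ * ((k : ℝ) + k₀ + 1) - 1))
    (q : ℕ → EuclideanSpace ℝ (Fin N) → ℝ)
    (hq : ∀ k u, q k u = η k * ‖u‖ ^ 2 - β k * ‖A u‖ ^ 2)
    (x : ℕ → EuclideanSpace ℝ (Fin N)) (xx : EuclideanSpace ℝ (Fin N)) :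
    -(∑ k ∈ Finset.Icc 1 t, ((k : ℝ) + k₀ + 1) *
          (1 / 2 * (q k (x (k + 1) - xx) - q k (x k - xx) + q k (x (k + 1) - x k))
            - Lm / 2 * ‖x (k + 1) - x k‖ ^ 2))
      - μ * ((t : ℝ) + k₀ + 1) / 2 * ‖x (t + 1) - xx‖ ^ 2
      - (∑ k ∈ Finset.Icc 2 t, μ * (θ * ((k : ℝ) + k₀ + 1) - 1) / 2 * ‖x k - xx‖ ^ 2)
    ≤ η 1 * (k₀ + 2) / 2 * ‖x 1 - xx‖ ^ 2
      - ((t : ℝ) + k₀ + 1) / 2 *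
          ((μ + η t) * ‖x (t + 1) - xx‖ ^ 2 - β t * ‖A (x (t + 1) - xx)‖ ^ 2) := by
  revert hβmono hmat hηmono
  induction t, ht using Nat.le_induction with
  | base =>
    intro hβmono hmat hηmono
    have h1 := hmat 1 le_rfl le_rfl (x (1+1) - x 1)
    have hb := hβnn 1
    have ha : (0:ℝ) ≤ ‖A (x 1 - xx)‖ ^ 2 := by positivity
    simp only [Finset.Icc_self, Finset.sum_singleton, show Finset.Icc 2 1 = ∅ by decide,
      Finset.sum_empty, hq, Nat.cast_one] at h1 ⊢
    nlinarith [mul_nonneg hb ha]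
  | succ t ht ih =>
    intro hβmono hmat hηmono
    have ihx := ih (fun k h2 hkt => hβmono k h2 (hkt.trans (Nat.le_succ t)))
      (fun k h1 hkt => hmat k h1 (hkt.trans (Nat.le_succ t)))
      (fun k h2 hkt => hηmono k h2 (hkt.trans (Nat.le_succ t)))
    rw [Finset.sum_Icc_succ_top (by omega : 1 ≤ t + 1),
        Finset.sum_Icc_succ_top (by omega : 2 ≤ t + 1)]
    have h1 := hmat (t+1) (by omega) le_rfl (x (t+2) - x (t+1))
    have h2 := hβmono (t+1) (by omega) le_rfl
    have h3 := hηmono (t+1) (by omega) le_rfl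
    simp only [Nat.add_sub_cancel] at h2 h3
    push_cast at h1 h2 h3 ihx ⊢
    have ha : (0:ℝ) ≤ ‖A (x (t+1) - xx)‖ ^ 2 := by positivity
    have hn : (0:ℝ) ≤ ‖x (t+1) - xx‖ ^ 2 := by positivity
    have e2 : (β (t+1) * ((t:ℝ) + 1 + k₀ + 1) - β t * ((t:ℝ) + 1 + k₀)) * ‖A (x (t+1) - xx)‖ ^ 2 ≥ 0 :=
      mul_nonneg (by linarith) ha
    have e3 : (((t:ℝ) + 1 + k₀) * η t + μ * (θ * ((t:ℝ) + 1 + k₀ + 1) - 1)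
        - ((t:ℝ) + 1 + k₀ + 1) * η (t+1)) * ‖x (t+1) - xx‖ ^ 2 ≥ 0 :=
      mul_nonneg (by linarith) hn
    simp only [hq] at ihx ⊢
    push_cast
    nlinarith [ihx, e2, e3, h1]
end
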